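/- arXiv:1306.6155 — 6 statements merged into one kernel-verified Lean document; each statement's English description precedes it below -/
import Mathlib

section
/- For every real x with 0 < x < 1 and every real s ≥ 1, the following identity of formal power series (or convergent series for |x|<1, |y|≤1) holds: 1 + ∑_{n≥1} p(n) x^n · E[y^{X_{s,n}}] = g(x) · ∏_{1 ≤ j ≤ ⌊s⌋} (1 − x^j)/(1 − (xy)^j), where g(x) = ∏_{k≥1}(1 − x^k)^{-1}. -/
open Finset Filter Topology
open scoped NNReal

set_option maxHeartbeats 1000000

/-- `X_{s,n}(λ)`: total size contributed by parts of `λ` of size at most `s`.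
Since all parts are at most `n`, this agrees with the paper's convention
`X_{s,n} = n` for `s > n`. -/
noncomputable def Xsn (s : ℝ) {n : ℕ} (lam : Nat.Partition n) : ℕ :=
  (lam.parts.filter (fun j => j ≤ ⌊s⌋₊)).sum

private lemma stepA {K : Type*} [NormedField K] [CompleteSpace K]
    (N : ℕ) (u : ℕ → K) (hu : ∀ j, ‖u j‖ < 1) :
      HasSum (fun α : Fin N → ℕ => ∏ j : Fin N, u j.val ^ α j)
        (∏ j ∈ Finset.range N, (1 - u j)⁻¹) ∧
      Summable (fun α : Fin N → ℕ => ‖∏ j : Fin N, u j.val ^ α j‖) := by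
  induction N generalizing u with
  | zero =>
    have h1 : (fun α : Fin 0 → ℕ => ∏ j : Fin 0, u j.val ^ α j) = fun _ => (1 : K) := by
      funext α; simp
    have h1n : (fun α : Fin 0 → ℕ => ‖∏ j : Fin 0, u j.val ^ α j‖) = fun _ => ‖(1 : K)‖ := by
      funext α; simp
    have h2 : HasSum (fun _ : Fin 0 → ℕ => (1 : K)) 1 :=
      hasSum_single default (fun b hb => absurd (Subsingleton.elim b default) hb)
    constructor
    · rw [h1]; simpa using h2
    · rw [h1n]
      exact (hasSum_single (f := fun _ : Fin 0 → ℕ => ‖(1:K)‖) default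
        (fun b hb => absurd (Subsingleton.elim b default) hb)).summable
  | succ N ih =>
    obtain ⟨ihS, ihN⟩ := ih (fun j => u (j + 1)) (fun j => hu (j + 1))
    have hgeom : HasSum (fun k : ℕ => u 0 ^ k) (1 - u 0)⁻¹ :=
      hasSum_geometric_of_norm_lt_one (hu 0)
    have hgeomN : Summable (fun k : ℕ => ‖u 0 ^ k‖) := by
      simpa [norm_pow] using summable_geometric_of_lt_one (norm_nonneg (u 0)) (hu 0)
    have keyN : Summable fun p : ℕ × (Fin N → ℕ) =>
        ‖u 0 ^ p.1 * ∏ j : Fin N, u (j.val + 1) ^ p.2 j‖ :=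
      Summable.mul_norm (f := fun k : ℕ => u 0 ^ k)
        (g := fun α : Fin N → ℕ => ∏ j : Fin N, u (j.val + 1) ^ α j) hgeomN ihN
    have key : HasSum (fun p : ℕ × (Fin N → ℕ) =>
          u 0 ^ p.1 * ∏ j : Fin N, u (j.val + 1) ^ p.2 j)
        ((1 - u 0)⁻¹ * ∏ j ∈ Finset.range N, (1 - u (j + 1))⁻¹) :=
      HasSum.mul (f := fun k : ℕ => u 0 ^ k)
        (g := fun α : Fin N → ℕ => ∏ j : Fin N, u (j.val + 1) ^ α j) hgeom ihS keyN.of_norm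
    set e : (Fin (N + 1) → ℕ) ≃ ℕ × (Fin N → ℕ) := (Fin.consEquiv fun _ => ℕ).symm with he
    have hcomp : ∀ α : Fin (N + 1) → ℕ, (∏ j : Fin (N+1), u j.val ^ α j)
        = u 0 ^ (e α).1 * ∏ j : Fin N, u (j.val + 1) ^ (e α).2 j := by
      intro α
      rw [Fin.prod_univ_succ]
      simp only [he, Fin.consEquiv, Equiv.coe_fn_symm_mk, Fin.val_succ, Fin.val_zero]
      rfl
    have hcomp' : (fun α : Fin (N + 1) → ℕ => ∏ j : Fin (N+1), u j.val ^ α j)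
        = (fun p : ℕ × (Fin N → ℕ) => u 0 ^ p.1 * ∏ j : Fin N, u (j.val + 1) ^ p.2 j) ∘ e :=
      funext fun α => hcomp α
    have hcompN : (fun α : Fin (N + 1) → ℕ => ‖∏ j : Fin (N+1), u j.val ^ α j‖)
        = (fun p : ℕ × (Fin N → ℕ) => ‖u 0 ^ p.1 * ∏ j : Fin N, u (j.val + 1) ^ p.2 j‖) ∘ e :=
      funext fun α => by rw [Function.comp_apply, ← hcomp α]
    have hval : (∏ j ∈ Finset.range (N + 1), (1 - u j)⁻¹)
        = (1 - u 0)⁻¹ * ∏ j ∈ Finset.range N, (1 - u (j + 1))⁻¹ := by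
      rw [Finset.prod_range_succ' (fun j => (1 - u j)⁻¹) N, mul_comm]
    constructor
    · rw [hcomp', hval]; exact (Equiv.hasSum_iff e).mpr key
    · rw [hcompN]; exact (Equiv.summable_iff e).mpr keyN

/-- The type of all partitions of all natural numbers. -/
private abbrev PartSig : Type := Σ n : ℕ, Nat.Partition n

private lemma partSig_ext {p q : PartSig} (h : p.2.parts = q.2.parts) : p = q := by
  obtain ⟨n, P⟩ := p
  obtain ⟨n', Q⟩ := q
  have h' : P.parts = Q.parts := h
  have hn : n = n' := by rw [← P.parts_sum, ← Q.parts_sum, h']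
  subst hn
  exact congrArg (Sigma.mk n) (Nat.Partition.ext h')

private def mkParts (N : ℕ) (α : Fin N → ℕ) : Multiset ℕ :=
  ∑ j : Fin N, Multiset.replicate (α j) (j.val + 1)

private lemma count_mkParts (N : ℕ) (α : Fin N → ℕ) (j : Fin N) :
    (mkParts N α).count (j.val + 1) = α j := by
  rw [mkParts, Multiset.count_sum']
  rw [Finset.sum_eq_single j]
  · simp [Multiset.count_replicate]
  · intro b _ hb
    rw [Multiset.count_replicate, if_neg]
    intro hc
    exact hb (Fin.ext (by omega))
  · simp

private lemma count_mkParts_zero (N : ℕ) (α : Fin N → ℕ) :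
    (mkParts N α).count 0 = 0 := by
  rw [mkParts, Multiset.count_sum']
  refine Finset.sum_eq_zero fun j _ => ?_
  rw [Multiset.count_replicate, if_neg (by omega)]

private lemma count_mkParts_gt (N : ℕ) (α : Fin N → ℕ) (k : ℕ) (hk : N < k) :
    (mkParts N α).count k = 0 := by
  rw [mkParts, Multiset.count_sum']
  refine Finset.sum_eq_zero fun j _ => ?_
  rw [Multiset.count_replicate, if_neg (by omega)]

private lemma mem_mkParts_pos (N : ℕ) (α : Fin N → ℕ) {i : ℕ} (hi : i ∈ mkParts N α) : 0 < i := by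
  by_contra h
  have : i = 0 := by omega
  subst this
  rw [← Multiset.count_pos, count_mkParts_zero] at hi
  omega

private lemma mem_mkParts_le (N : ℕ) (α : Fin N → ℕ) {i : ℕ} (hi : i ∈ mkParts N α) : i ≤ N := by
  by_contra h
  rw [← Multiset.count_pos, count_mkParts_gt N α i (by omega)] at hi
  omega

private lemma sum_mkParts (N : ℕ) (α : Fin N → ℕ) :
    (mkParts N α).sum = ∑ j : Fin N, (j.val + 1) * α j := by
  rw [mkParts, Multiset.sum_sum]
  refine Finset.sum_congr rfl fun j _ => ?_
  rw [Multiset.sum_replicate, smul_eq_mul, mul_comm]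

private lemma map_mkParts {M : Type*} [CommMonoid M] (N : ℕ) (α : Fin N → ℕ) (w : ℕ → M) :
    ((mkParts N α).map w).prod = ∏ j : Fin N, w (j.val + 1) ^ α j := by
  have hmap : (mkParts N α).map w
      = ∑ j : Fin N, Multiset.replicate (α j) (w (j.val + 1)) := by
    rw [mkParts]
    induction (Finset.univ : Finset (Fin N)) using Finset.cons_induction with
    | empty => simp
    | cons a s has ih => rw [Finset.sum_cons, Finset.sum_cons, Multiset.map_add, ih,
        Multiset.map_replicate]
  rw [hmap, Multiset.prod_sum]
  refine Finset.prod_congr rfl fun j _ => ?_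
  rw [Multiset.prod_replicate]

/-- Partitions with all parts at most `N`. -/
private def eqN (N : ℕ) : (Fin N → ℕ) ≃ {p : PartSig // ∀ i ∈ p.2.parts, i ≤ N} where
  toFun α := ⟨⟨(mkParts N α).sum, ⟨mkParts N α, fun hi => mem_mkParts_pos N α hi, rfl⟩⟩,
    fun i hi => mem_mkParts_le N α hi⟩
  invFun p := fun j => p.1.2.parts.count (j.val + 1)
  left_inv α := by
    funext j
    exact count_mkParts N α j
  right_inv p := by
    refine Subtype.ext (partSig_ext ?_)
    show mkParts N (fun j => p.1.2.parts.count (j.val + 1)) = p.1.2.parts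
    ext k
    rcases Nat.eq_zero_or_pos k with hk | hk
    · subst hk
      rw [count_mkParts_zero]
      symm
      rw [Multiset.count_eq_zero]
      intro h
      exact absurd (p.1.2.parts_pos h) (lt_irrefl 0)
    · by_cases hkN : k ≤ N
      · have : k = (⟨k - 1, by omega⟩ : Fin N).val + 1 := by simp; omega
        rw [this, count_mkParts]
      · rw [count_mkParts_gt N _ k (by omega)]
        symm
        rw [Multiset.count_eq_zero]
        intro h
        exact hkN (p.2 k h)

private lemma xpow_lt_one {x : ℝ} (hx0 : 0 < x) (hx1 : x < 1) (j : ℕ) : x ^ (j + 1) < 1 :=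
  pow_lt_one₀ hx0.le hx1 (Nat.succ_ne_zero j)

private lemma sub_xpow_pos {x : ℝ} (hx0 : 0 < x) (hx1 : x < 1) (j : ℕ) :
    0 < 1 - x ^ (j + 1) := by
  have := xpow_lt_one hx0 hx1 j; linarith

private lemma bound_prod {x : ℝ} (hx0 : 0 < x) (hx1 : x < 1) (S : Finset ℕ) :
    ∏ j ∈ S, (1 - x ^ (j + 1))⁻¹ ≤ Real.exp ((1 - x)⁻¹ * (1 - x)⁻¹) := by
  have hx' : 0 < 1 - x := by linarith
  have step : ∀ j : ℕ, (1 - x ^ (j + 1))⁻¹ ≤ Real.exp (x ^ (j + 1) * (1 - x)⁻¹) := by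
    intro j
    set t := x ^ (j + 1) with ht
    have ht0 : 0 ≤ t := pow_nonneg hx0.le _
    have ht1 : t < 1 := xpow_lt_one hx0 hx1 j
    have htx : t ≤ x := by
      rw [ht]
      calc x ^ (j + 1) ≤ x ^ 1 := pow_le_pow_of_le_one hx0.le hx1.le (by omega)
        _ = x := pow_one x
    have h1t : 0 < 1 - t := by linarith
    have key : (1 - t)⁻¹ = 1 + t / (1 - t) := by field_simp; ring
    have h2 : t / (1 - t) ≤ t * (1 - x)⁻¹ := by
      rw [div_eq_mul_inv]
      exact mul_le_mul_of_nonneg_left (inv_anti₀ hx' (by linarith)) ht0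
    calc (1 - t)⁻¹ = 1 + t / (1 - t) := key
      _ ≤ 1 + t * (1 - x)⁻¹ := by linarith
      _ ≤ Real.exp (t * (1 - x)⁻¹) := by
          have := Real.add_one_le_exp (t * (1 - x)⁻¹); linarith
  calc ∏ j ∈ S, (1 - x ^ (j + 1))⁻¹
      ≤ ∏ j ∈ S, Real.exp (x ^ (j + 1) * (1 - x)⁻¹) := by
        refine Finset.prod_le_prod (fun j _ => ?_) (fun j _ => step j)
        exact inv_nonneg.mpr (sub_xpow_pos hx0 hx1 j).le
    _ = Real.exp (∑ j ∈ S, x ^ (j + 1) * (1 - x)⁻¹) := (Real.exp_sum S _).symm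
    _ ≤ Real.exp ((1 - x)⁻¹ * (1 - x)⁻¹) := by
        refine Real.exp_le_exp.mpr ?_
        rw [← Finset.sum_mul]
        refine mul_le_mul_of_nonneg_right ?_ (inv_nonneg.mpr hx'.le)
        calc ∑ j ∈ S, x ^ (j + 1) ≤ ∑ j ∈ S, x ^ j := by
              refine Finset.sum_le_sum fun j _ => ?_
              exact pow_le_pow_of_le_one hx0.le hx1.le (by omega)
          _ ≤ ∑' j : ℕ, x ^ j :=
              Summable.sum_le_tsum S (fun j _ => pow_nonneg hx0.le j)
                (summable_geometric_of_lt_one hx0.le hx1)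
          _ = (1 - x)⁻¹ := tsum_geometric_of_lt_one hx0.le hx1

private lemma hasProdX {x : ℝ} (hx0 : 0 < x) (hx1 : x < 1) :
    HasProd (fun j : ℕ => (1 - (x : ℂ) ^ (j + 1))⁻¹)
      (∏' k : ℕ+, (1 - (x : ℂ) ^ (k : ℕ))⁻¹) := by
  classical
  set f₀ : ℕ → ℝ≥0 := fun j => Real.toNNReal ((1 - x ^ (j + 1))⁻¹) with hf₀
  have hcoe : ∀ j, (f₀ j : ℝ) = (1 - x ^ (j + 1))⁻¹ := fun j =>
    Real.coe_toNNReal _ (inv_nonneg.mpr (sub_xpow_pos hx0 hx1 j).le)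
  have hone : ∀ j, 1 ≤ f₀ j := by
    intro j
    rw [← NNReal.coe_le_coe, hcoe j, NNReal.coe_one, one_le_inv_iff₀]
    refine ⟨sub_xpow_pos hx0 hx1 j, ?_⟩
    have := pow_nonneg hx0.le (j + 1); linarith
  have hbdd : BddAbove (Set.range fun S : Finset ℕ => ∏ j ∈ S, f₀ j) := by
    refine ⟨Real.toNNReal (Real.exp ((1 - x)⁻¹ * (1 - x)⁻¹)), ?_⟩
    rintro _ ⟨S, rfl⟩
    rw [← NNReal.coe_le_coe, NNReal.coe_prod, Real.coe_toNNReal _ (Real.exp_nonneg _)]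
    calc ∏ j ∈ S, (f₀ j : ℝ) = ∏ j ∈ S, (1 - x ^ (j + 1))⁻¹ :=
          Finset.prod_congr rfl fun j _ => hcoe j
      _ ≤ _ := bound_prod hx0 hx1 S
  have hlub := isLUB_csSup (Set.range_nonempty _) hbdd
  have hprod₀ : HasProd f₀ (sSup (Set.range fun S : Finset ℕ => ∏ j ∈ S, f₀ j)) :=
    hasProd_of_isLUB_of_one_le _ hone hlub
  set a : ℝ≥0 := sSup (Set.range fun S : Finset ℕ => ∏ j ∈ S, f₀ j) with ha
  have hprodR : HasProd (fun j : ℕ => (1 - x ^ (j + 1))⁻¹) ((a : ℝ)) := by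
    have h := hprod₀.map NNReal.toRealHom.toMonoidHom NNReal.continuous_coe
    exact h.congr_fun fun j => (hcoe j).symm
  have hprodC : HasProd (fun j : ℕ => (((1 - x ^ (j + 1))⁻¹ : ℝ) : ℂ)) ((a : ℝ) : ℂ) :=
    hprodR.map Complex.ofRealHom.toMonoidHom Complex.continuous_ofReal
  have hfun : (fun j : ℕ => (((1 - x ^ (j + 1))⁻¹ : ℝ) : ℂ))
      = fun j : ℕ => (1 - (x : ℂ) ^ (j + 1))⁻¹ := by
    funext j; push_cast; ring
  rw [hfun] at hprodC
  have htp : (∏' k : ℕ+, (1 - (x : ℂ) ^ (k : ℕ))⁻¹)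
      = ∏' j : ℕ, (1 - (x : ℂ) ^ (j + 1))⁻¹ := by
    rw [← Equiv.tprod_eq Equiv.pnatEquivNat.symm (fun k : ℕ+ => (1 - (x : ℂ) ^ (k : ℕ))⁻¹)]
    refine tprod_congr fun n => ?_
    congr 1
  rw [htp, hprodC.tprod_eq]
  exact hprodC


private def wfun (x : ℝ) (y : ℂ) (m : ℕ) : ℕ → ℂ :=
  fun j => (x : ℂ) ^ j * (if j ≤ m then y ^ j else 1)

private def Wfun (x : ℝ) (y : ℂ) (m : ℕ) : PartSig → ℂ :=
  fun p => (p.2.parts.map (wfun x y m)).prod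

private lemma norm_wfun_le {x : ℝ} (hx0 : 0 < x) {y : ℂ} (hy : ‖y‖ ≤ 1) (m j : ℕ) :
    ‖wfun x y m j‖ ≤ x ^ j := by
  rw [wfun, norm_mul]
  have h1 : ‖(x : ℂ) ^ j‖ = x ^ j := by
    rw [norm_pow, Complex.norm_real, Real.norm_eq_abs, abs_of_pos hx0]
  rw [h1]
  have h2 : ‖if j ≤ m then y ^ j else 1‖ ≤ 1 := by
    split
    · rw [norm_pow]; exact pow_le_one₀ (norm_nonneg y) hy
    · simp
  calc x ^ j * ‖if j ≤ m then y ^ j else 1‖ ≤ x ^ j * 1 :=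
        mul_le_mul_of_nonneg_left h2 (pow_nonneg hx0.le j)
    _ = x ^ j := mul_one _

private lemma prod_map_wfun (x : ℝ) (y : ℂ) (m : ℕ) (M : Multiset ℕ) :
    (M.map (wfun x y m)).prod
      = (x : ℂ) ^ M.sum * y ^ (M.filter (fun j => j ≤ m)).sum := by
  induction M using Multiset.induction with
  | empty => simp
  | cons a M ih =>
    rw [Multiset.map_cons, Multiset.prod_cons, ih, Multiset.sum_cons, Multiset.filter_cons]
    by_cases ha : a ≤ m
    · rw [if_pos ha, Multiset.singleton_add, Multiset.sum_cons]
      simp only [wfun, if_pos ha]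
      rw [pow_add, pow_add]
      ring
    · rw [if_neg ha, zero_add]
      simp only [wfun, if_neg ha]
      rw [pow_add]
      ring

private lemma norm_Wfun_le {x : ℝ} (hx0 : 0 < x) (hx1 : x < 1) {y : ℂ} (hy : ‖y‖ ≤ 1)
    (m : ℕ) (p : PartSig) : ‖Wfun x y m p‖ ≤ x ^ p.1 := by
  rw [Wfun, prod_map_wfun, norm_mul, norm_pow, norm_pow, Complex.norm_real,
    Real.norm_eq_abs, abs_of_pos hx0, p.2.parts_sum]
  have h2 : ‖y‖ ^ (Multiset.filter (fun j => j ≤ m) p.2.parts).sum ≤ 1 :=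
    pow_le_one₀ (norm_nonneg y) hy
  calc x ^ p.1 * ‖y‖ ^ _ ≤ x ^ p.1 * 1 :=
        mul_le_mul_of_nonneg_left h2 (pow_nonneg hx0.le _)
    _ = x ^ p.1 := mul_one _

private lemma parts_le_fst (p : PartSig) : ∀ i ∈ p.2.parts, i ≤ p.1 := by
  intro i hi
  have := Multiset.single_le_sum (fun a _ => Nat.zero_le a) i hi
  rwa [p.2.parts_sum] at this

private def iota {n : ℕ} (P : Nat.Partition n) : Fin n → ℕ :=
  (eqN n).symm ⟨⟨n, P⟩, parts_le_fst ⟨n, P⟩⟩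

private lemma summable_bound {x : ℝ} (hx0 : 0 < x) (hx1 : x < 1) :
    Summable (fun p : PartSig => x ^ p.1) := by
  set x' : ℝ := (x + 1) / 2 with hx'
  have hx'0 : 0 < x' := by rw [hx']; linarith
  have hx'1 : x' < 1 := by rw [hx']; linarith
  have hxx' : x < x' := by rw [hx']; linarith
  set C : ℝ := Real.exp ((1 - x')⁻¹ * (1 - x')⁻¹) with hC
  -- bound on card * x'^n
  have hcard : ∀ n : ℕ, (Fintype.card (Nat.Partition n) : ℝ) * x' ^ n ≤ C := by
    intro n
    have hstep := stepA n (fun j => x' ^ (j + 1)) (fun j => by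
      rw [Real.norm_eq_abs, abs_of_pos (pow_pos hx'0 _)]
      exact xpow_lt_one hx'0 hx'1 j)
    set g : (Fin n → ℕ) → ℝ := fun α => ∏ j : Fin n, (x' ^ (j.val + 1)) ^ α j with hg
    have hgsum : HasSum g (∏ j ∈ Finset.range n, (1 - x' ^ (j + 1))⁻¹) := hstep.1
    have hparts : ∀ P : Nat.Partition n, mkParts n (iota P) = P.parts := by
      intro P
      have hP : ((eqN n) (iota P) : {p : PartSig // ∀ i ∈ p.2.parts, i ≤ n})
          = ⟨⟨n, P⟩, parts_le_fst ⟨n, P⟩⟩ := by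
        rw [iota, Equiv.apply_symm_apply]
      have := congrArg (fun q : {p : PartSig // ∀ i ∈ p.2.parts, i ≤ n} => q.1.2.parts) hP
      exact this
    set ι : Nat.Partition n → (Fin n → ℕ) := iota with hι
    have hιinj : Function.Injective ι := by
      intro P Q h
      have h2 : P.parts = Q.parts := by
        rw [← hparts P, ← hparts Q, hι] at *
        rw [h]
      exact Nat.Partition.ext h2
    have hgι : ∀ P : Nat.Partition n, g (ι P) = x' ^ n := by
      intro P
      have hsum : ∑ j : Fin n, (j.val + 1) * (ι P) j = n := by
        rw [hι, ← sum_mkParts, hparts, P.parts_sum]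
      rw [hg]
      simp only
      calc ∏ j : Fin n, (x' ^ (j.val + 1)) ^ (ι P) j
          = ∏ j : Fin n, x' ^ ((j.val + 1) * (ι P) j) := by
            refine Finset.prod_congr rfl fun j _ => ?_; rw [← pow_mul]
        _ = x' ^ (∑ j : Fin n, (j.val + 1) * (ι P) j) := by
            rw [Finset.prod_pow_eq_pow_sum]
        _ = x' ^ n := by rw [hsum]
    calc (Fintype.card (Nat.Partition n) : ℝ) * x' ^ n
        = ∑ P : Nat.Partition n, x' ^ n := by
          rw [Finset.sum_const, Finset.card_univ, nsmul_eq_mul]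
      _ = ∑ P : Nat.Partition n, g (ι P) := by
          refine Finset.sum_congr rfl fun P _ => (hgι P).symm
      _ = ∑ α ∈ Finset.univ.image ι, g α := by
          rw [Finset.sum_image (fun a _ b _ h => hιinj h)]
      _ ≤ ∑' α : Fin n → ℕ, g α := by
          refine Summable.sum_le_tsum _ (fun α _ => ?_) hgsum.summable
          exact Finset.prod_nonneg fun j _ => pow_nonneg (pow_nonneg hx'0.le _) _
      _ = ∏ j ∈ Finset.range n, (1 - x' ^ (j + 1))⁻¹ := hgsum.tsum_eq
      _ ≤ C := bound_prod hx'0 hx'1 _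
  -- summability over ℕ of card * x^n
  have hsummN : Summable (fun n : ℕ => (Fintype.card (Nat.Partition n) : ℝ) * x ^ n) := by
    have hgeo : Summable (fun n : ℕ => C * (x / x') ^ n) :=
      (summable_geometric_of_lt_one (by positivity)
        (by rw [div_lt_one hx'0]; exact hxx')).mul_left C
    refine Summable.of_nonneg_of_le (fun n => by positivity) (fun n => ?_) hgeo
    have hxsplit : x ^ n = x' ^ n * (x / x') ^ n := by
      rw [← mul_pow]
      congr 1
      field_simp
    calc (Fintype.card (Nat.Partition n) : ℝ) * x ^ n
        = ((Fintype.card (Nat.Partition n) : ℝ) * x' ^ n) * (x / x') ^ n := by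
          rw [hxsplit, mul_assoc]
      _ ≤ C * (x / x') ^ n := by
          refine mul_le_mul_of_nonneg_right (hcard n) ?_
          positivity
  -- conclude by sigma summability
  refine (summable_sigma_of_nonneg (fun p => pow_nonneg hx0.le _)).mpr ⟨?_, ?_⟩
  · intro n; exact (hasSum_fintype _).summable
  · refine hsummN.congr fun n => ?_
    rw [tsum_fintype]
    have h0 : ∑ P : Nat.Partition n, x ^ (⟨n, P⟩ : PartSig).fst
        = ∑ P : Nat.Partition n, x ^ n := Finset.sum_congr rfl fun P _ => rfl
    rw [h0, Finset.sum_const, Finset.card_univ, nsmul_eq_mul]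

private lemma tendsto_partial_products {x : ℝ} (hx0 : 0 < x) (hx1 : x < 1)
    {y : ℂ} (hy : ‖y‖ ≤ 1) (m : ℕ) :
    Tendsto (fun N : ℕ => ∏ j ∈ Finset.range N, (1 - wfun x y m (j + 1))⁻¹) atTop
      (𝓝 (∑' p : PartSig, Wfun x y m p)) := by
  have hnorm : ∀ j : ℕ, ‖wfun x y m (j + 1)‖ < 1 := fun j =>
    lt_of_le_of_lt (norm_wfun_le hx0 hy m (j + 1)) (xpow_lt_one hx0 hx1 j)
  have hWα : ∀ (N : ℕ) (α : Fin N → ℕ),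
      Wfun x y m ((eqN N α : {p : PartSig // ∀ i ∈ p.2.parts, i ≤ N}) : PartSig)
        = ∏ j : Fin N, wfun x y m (j.val + 1) ^ α j := by
    intro N α
    exact map_mkParts N α (wfun x y m)
  have hts : ∀ N : ℕ,
      ∑' p : PartSig, Set.indicator {p : PartSig | ∀ i ∈ p.2.parts, i ≤ N} (Wfun x y m) p
        = ∏ j ∈ Finset.range N, (1 - wfun x y m (j + 1))⁻¹ := by
    intro N
    rw [← _root_.tsum_subtype]
    let e : (Fin N → ℕ) ≃ ↑{p : PartSig | ∀ i ∈ p.2.parts, i ≤ N} := eqN N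
    rw [← Equiv.tsum_eq e (fun q : ↑{p : PartSig | ∀ i ∈ p.2.parts, i ≤ N} => Wfun x y m q.1)]
    have h1 : ∀ α : Fin N → ℕ,
        Wfun x y m ((e α : ↑{p : PartSig | ∀ i ∈ p.2.parts, i ≤ N}) : PartSig)
          = ∏ j : Fin N, wfun x y m (j.val + 1) ^ α j := fun α => by
      show ((mkParts N α).map (wfun x y m)).prod = _
      exact map_mkParts N α (wfun x y m)
    rw [tsum_congr h1]
    exact (stepA N (fun j => wfun x y m (j + 1)) hnorm).1.tsum_eq
  have hlim : ∀ p : PartSig,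
      Tendsto (fun N : ℕ =>
        Set.indicator {p : PartSig | ∀ i ∈ p.2.parts, i ≤ N} (Wfun x y m) p) atTop
        (𝓝 (Wfun x y m p)) := by
    intro p
    refine Tendsto.congr' ?_ tendsto_const_nhds
    filter_upwards [eventually_ge_atTop p.1] with N hN
    rw [Set.indicator_of_mem]
    intro i hi
    exact le_trans (parts_le_fst p i hi) hN
  have hbnd : ∀ᶠ (N : ℕ) in atTop, ∀ p : PartSig,
      ‖Set.indicator {p : PartSig | ∀ i ∈ p.2.parts, i ≤ N} (Wfun x y m) p‖ ≤ x ^ p.1 := by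
    refine Filter.Eventually.of_forall fun N => fun p => ?_
    by_cases hp : p ∈ {p : PartSig | ∀ i ∈ p.2.parts, i ≤ N}
    · rw [Set.indicator_of_mem hp]
      exact norm_Wfun_le hx0 hx1 hy m p
    · rw [Set.indicator_of_notMem hp, norm_zero]
      exact pow_nonneg hx0.le _
  have hdom := tendsto_tsum_of_dominated_convergence
    (f := fun (N : ℕ) (p : PartSig) =>
      Set.indicator {p : PartSig | ∀ i ∈ p.2.parts, i ≤ N} (Wfun x y m) p)
    (g := Wfun x y m) (bound := fun p : PartSig => x ^ p.1)
    (summable_bound hx0 hx1) hlim hbnd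
  exact Tendsto.congr (fun N => hts N) hdom

private lemma one_sub_ne_zero {z : ℂ} (hz : ‖z‖ < 1) : 1 - z ≠ 0 := by
  intro h
  have : z = 1 := by linear_combination -h
  rw [this] at hz
  simp at hz

/-- For `0 < x < 1`, `s ≥ 1` and `‖y‖ ≤ 1`:
`1 + ∑_{n≥1} p(n) xⁿ E(y^{X_{s,n}}) = g(x) ∏_{1 ≤ j ≤ ⌊s⌋} (1−xʲ)/(1−(xy)ʲ)`. -/
theorem pgf_Xsn (x : ℝ) (hx0 : 0 < x) (hx1 : x < 1) (s : ℝ) (hs : 1 ≤ s)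
    (y : ℂ) (hy : ‖y‖ ≤ 1) :
    1 + ∑' n : ℕ+, (Fintype.card (Nat.Partition (n : ℕ)) : ℂ) * (x : ℂ) ^ (n : ℕ) *
        ((Fintype.card (Nat.Partition (n : ℕ)) : ℂ)⁻¹ *
          ∑ lam : Nat.Partition (n : ℕ), y ^ Xsn s lam)
      = (∏' k : ℕ+, (1 - (x : ℂ) ^ (k : ℕ))⁻¹) *
        ∏ j ∈ Finset.Icc 1 ⌊s⌋₊, (1 - (x : ℂ) ^ j) / (1 - ((x : ℂ) * y) ^ j) := by
  classical
  set m : ℕ := ⌊s⌋₊ with hm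
  set w : ℕ → ℂ := wfun x y m with hw
  set W : PartSig → ℂ := Wfun x y m with hW
  -- summability of W
  have hsummW : Summable W := by
    refine Summable.of_norm (Summable.of_nonneg_of_le (fun p => norm_nonneg _)
      (fun p => norm_Wfun_le hx0 hx1 hy m p) (summable_bound hx0 hx1))
  set A : ℂ := ∑' p : PartSig, W p with hA
  have hhasW : HasSum W A := hsummW.hasSum
  -- fiberwise sums
  set g : ℕ → ℂ := fun n => ∑ P : Nat.Partition n, W ⟨n, P⟩ with hg
  have hgn : ∀ n : ℕ, HasSum (fun P : Nat.Partition n => W ⟨n, P⟩) (g n) :=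
    fun n => hasSum_fintype _
  have hhasg : HasSum g A := HasSum.sigma hhasW hgn
  have hg0 : g 0 = 1 := by
    show (∑ P : Nat.Partition 0, W ⟨0, P⟩) = 1
    rw [show (∑ P : Nat.Partition 0, W ⟨0, P⟩) = W ⟨0, default⟩ from Fintype.sum_unique _]
    show (Multiset.map w (default : Nat.Partition 0).parts).prod = 1
    simp
  have hhasg1 : HasSum (fun n : ℕ => g (n + 1)) (A - 1) := by
    rw [hasSum_nat_add_iff 1]
    simpa [hg0] using hhasg
  -- the statement's sum equals g
  have hTg : ∀ n : ℕ+, (Fintype.card (Nat.Partition (n : ℕ)) : ℂ) * (x : ℂ) ^ (n : ℕ) *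
      ((Fintype.card (Nat.Partition (n : ℕ)) : ℂ)⁻¹ *
        ∑ lam : Nat.Partition (n : ℕ), y ^ Xsn s lam) = g (n : ℕ) := by
    intro n
    have hcard : (Fintype.card (Nat.Partition (n : ℕ)) : ℂ) ≠ 0 := by
      exact Nat.cast_ne_zero.mpr Fintype.card_ne_zero
    have h1 : (Fintype.card (Nat.Partition (n : ℕ)) : ℂ) * (x : ℂ) ^ (n : ℕ) *
        ((Fintype.card (Nat.Partition (n : ℕ)) : ℂ)⁻¹ *
          ∑ lam : Nat.Partition (n : ℕ), y ^ Xsn s lam)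
        = (x : ℂ) ^ (n : ℕ) * ∑ lam : Nat.Partition (n : ℕ), y ^ Xsn s lam := by
      field_simp
    rw [h1, hg, Finset.mul_sum]
    refine Finset.sum_congr rfl fun P _ => ?_
    rw [hW, Wfun]
    show (x : ℂ) ^ (n : ℕ) * y ^ Xsn s P = (Multiset.map w P.parts).prod
    rw [hw, prod_map_wfun, P.parts_sum]
    rfl
  -- sum over ℕ+ equals A - 1
  have hsum_pnat : ∑' n : ℕ+, g (n : ℕ) = A - 1 := by
    rw [← Equiv.tsum_eq Equiv.pnatEquivNat.symm (fun k : ℕ+ => g (k : ℕ))]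
    rw [show (fun n : ℕ => g ((Equiv.pnatEquivNat.symm n : ℕ+) : ℕ)) = fun n : ℕ => g (n + 1)
      from rfl]
    exact hhasg1.tsum_eq
  -- LHS equals A
  have hLHS : 1 + ∑' n : ℕ+, (Fintype.card (Nat.Partition (n : ℕ)) : ℂ) * (x : ℂ) ^ (n : ℕ) *
      ((Fintype.card (Nat.Partition (n : ℕ)) : ℂ)⁻¹ *
        ∑ lam : Nat.Partition (n : ℕ), y ^ Xsn s lam) = A := by
    rw [tsum_congr hTg, hsum_pnat]
    ring
  rw [hLHS]
  -- RHS : limit identification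
  set B : ℂ := ∏' k : ℕ+, (1 - (x : ℂ) ^ (k : ℕ))⁻¹ with hB
  set D : ℂ := ∏ j ∈ Finset.Icc 1 m, (1 - (x : ℂ) ^ j) / (1 - ((x : ℂ) * y) ^ j) with hD
  have hxk : ∀ k : ℕ, 1 ≤ k → ‖(x : ℂ) ^ k‖ < 1 := by
    intro k hk
    rw [norm_pow, Complex.norm_real, Real.norm_eq_abs, abs_of_pos hx0]
    obtain ⟨j, rfl⟩ : ∃ j, k = j + 1 := ⟨k - 1, by omega⟩
    exact xpow_lt_one hx0 hx1 j
  have hwk : ∀ k : ℕ, 1 ≤ k → ‖w k‖ < 1 := by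
    intro k hk
    refine lt_of_le_of_lt (norm_wfun_le hx0 hy m k) ?_
    obtain ⟨j, rfl⟩ : ∃ j, k = j + 1 := ⟨k - 1, by omega⟩
    exact xpow_lt_one hx0 hx1 j
  set d : ℕ → ℂ := fun k => (1 - (x : ℂ) ^ k) / (1 - w k) with hd
  have heq : ∀ᶠ N in atTop, (∏ j ∈ Finset.range N, (1 - w (j + 1))⁻¹)
      = (∏ j ∈ Finset.range N, (1 - (x : ℂ) ^ (j + 1))⁻¹) * D := by
    filter_upwards [eventually_ge_atTop m] with N hN
    have hfac : ∀ j : ℕ, (1 - w (j + 1))⁻¹ = (1 - (x : ℂ) ^ (j + 1))⁻¹ * d (j + 1) := by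
      intro j
      simp only [hd]
      rw [div_eq_mul_inv, ← mul_assoc, inv_mul_cancel₀ (one_sub_ne_zero (hxk (j+1) (by omega))),
        one_mul]
    rw [Finset.prod_congr rfl fun j _ => hfac j, Finset.prod_mul_distrib]
    congr 1
    -- ∏_{j < N} d (j+1) = ∏_{k ∈ Icc 1 N} d k = D
    have hIcc : ∀ M : ℕ, ∏ j ∈ Finset.range M, d (j + 1) = ∏ k ∈ Finset.Icc 1 M, d k := by
      intro M
      induction M with
      | zero => simp
      | succ M ih =>
        have hins : Finset.Icc 1 (M + 1) = insert (M + 1) (Finset.Icc 1 M) := by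
          ext k; simp [Finset.mem_Icc, Finset.mem_insert]; omega
        rw [Finset.prod_range_succ, ih, hins, Finset.prod_insert (by simp)]
        ring
    rw [hIcc N]
    rw [← Finset.prod_subset (Finset.Icc_subset_Icc_right hN) ?side]
    · rw [hD]
      refine Finset.prod_congr rfl fun k hk => ?_
      rw [Finset.mem_Icc] at hk
      simp only [hd, hw, wfun]
      rw [if_pos hk.2, ← mul_pow]
    case side =>
      intro k hkN hkm
      rw [Finset.mem_Icc] at hkN hkm
      have hk1 : 1 ≤ k := hkN.1
      have hkgt : m < k := by omega
      simp only [hd, hw, wfun]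
      rw [if_neg (by omega), mul_one, div_self]
      exact one_sub_ne_zero (hxk k hk1)
  have htendB : Tendsto (fun N : ℕ => (∏ j ∈ Finset.range N, (1 - (x : ℂ) ^ (j + 1))⁻¹) * D)
      atTop (𝓝 (B * D)) := (hasProdX hx0 hx1).tendsto_prod_nat.mul_const D
  have htendA : Tendsto (fun N : ℕ => ∏ j ∈ Finset.range N, (1 - w (j + 1))⁻¹) atTop (𝓝 A) :=
    tendsto_partial_products hx0 hx1 hy m
  have htendA' : Tendsto (fun N : ℕ => ∏ j ∈ Finset.range N, (1 - w (j + 1))⁻¹) atTop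
      (𝓝 (B * D)) := Tendsto.congr' (EventuallyEq.symm heq) htendB
  exact tendsto_nhds_unique htendA htendA'
end

section
/- For every real x with 0 < x < 1 and real s ≥ 1: 1 + ∑_{n≥1} p(n) x^n · E(y^{Y_{s,n}}) = g(x) · ∏_{1 ≤ j ≤ ⌊s⌋} (1 + (y−1)x^j) for all y with |y| ≤ 1, and consequently ∑_{n≥1} p(n) x^n · E(Y_{s,n}) = g(x) · (1 − x^{⌊s⌋+1})/(1 − x) − g(x). -/
set_option maxHeartbeats 1000000


/-- `Y_{s,n}(λ)`: the number of distinct part sizes of `λ` that are at most `s`.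
Since all parts are at most `n`, this agrees with the paper's convention for `s > n`. -/
noncomputable def Ysn (s : ℝ) {n : ℕ} (lam : Nat.Partition n) : ℕ :=
  (lam.parts.toFinset.filter (fun j => j ≤ ⌊s⌋₊)).card

namespace PgfAux

open Finset

/-- number of partitions of `n` all of whose parts are at most `N` -/
def cb (N n : ℕ) : ℕ :=
  (Finset.univ.filter (fun l : Nat.Partition n => ∀ j ∈ l.parts, j ≤ N)).card

/-- number of partitions of `n` containing every element of `t` as a part -/
def NS (t : Finset ℕ) (n : ℕ) : ℕ :=
  (Finset.univ.filter (fun l : Nat.Partition n => ∀ j ∈ t, j ∈ l.parts)).card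

lemma part_le {n : ℕ} (l : Nat.Partition n) {j : ℕ} (hj : j ∈ l.parts) : j ≤ n :=
  l.parts_sum ▸ Multiset.single_le_sum (fun _ _ => Nat.zero_le _) j hj

lemma partition_zero_parts (l : Nat.Partition 0) : l.parts = 0 := by
  refine Multiset.eq_zero_of_forall_notMem (fun j hj => ?_)
  have h1 := l.parts_pos hj
  have h2 := part_le l hj
  omega

lemma card_partition_zero : Fintype.card (Nat.Partition 0) = 1 := by
  rw [Fintype.card_eq_one_iff]
  refine ⟨⟨0, by simp, rfl⟩, fun l => ?_⟩
  ext1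
  simp [partition_zero_parts l]

instance (n : ℕ) : Nonempty (Nat.Partition n) :=
  ⟨Nat.Partition.ofSums n {n} (by simp)⟩

lemma card_partition_pos (n : ℕ) : 0 < Fintype.card (Nat.Partition n) :=
  Fintype.card_pos

lemma cb_zero (n : ℕ) : cb 0 n = if n = 0 then 1 else 0 := by
  rcases eq_or_ne n 0 with rfl | hn
  · rw [if_pos rfl, cb]
    rw [Finset.filter_true_of_mem, Finset.card_univ, card_partition_zero]
    intro l _ j hj
    have := part_le l hj
    omega
  · rw [if_neg hn, cb, Finset.card_eq_zero, Finset.filter_eq_empty_iff]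
    intro l _
    intro h
    apply hn
    rw [← l.parts_sum]
    have : l.parts = 0 := by
      refine Multiset.eq_zero_of_forall_notMem (fun j hj => ?_)
      have := l.parts_pos hj
      have := h j hj
      omega
    simp [this]

lemma cb_eq_card {N n : ℕ} (h : n ≤ N) : cb N n = Fintype.card (Nat.Partition n) := by
  rw [cb, Finset.filter_true_of_mem, Finset.card_univ]
  intro l _ j hj
  exact le_trans (part_le l hj) h

lemma cb_le (N n : ℕ) : cb N n ≤ Fintype.card (Nat.Partition n) :=
  le_trans (Finset.card_filter_le _ _) (le_of_eq Finset.card_univ)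



lemma msum_le {s t : Multiset ℕ} (h : s ≤ t) : s.sum ≤ t.sum := by
  calc s.sum ≤ (t - s).sum + s.sum := Nat.le_add_left _ _
  _ = ((t - s) + s).sum := (Multiset.sum_add _ _).symm
  _ = t.sum := by rw [tsub_add_cancel_of_le h]

lemma count_mul_le {n : ℕ} (l : Nat.Partition n) (k : ℕ) : k * l.parts.count k ≤ n := by
  have h1 : (l.parts.filter (· = k)).sum ≤ l.parts.sum := msum_le (Multiset.filter_le _ _)
  rw [Multiset.filter_eq', Multiset.sum_replicate, l.parts_sum] at h1
  simpa [mul_comm] using h1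

lemma cb_succ (N n : ℕ) :
    cb (N+1) n = ∑ ij ∈ Finset.HasAntidiagonal.antidiagonal n, cb N ij.1 * (if (N+1) ∣ ij.2 then 1 else 0) := by
  classical
  rw [cb, Finset.card_eq_sum_card_fiberwise
    (f := fun l : Nat.Partition n =>
      ((n - (N+1) * l.parts.count (N+1), (N+1) * l.parts.count (N+1)) : ℕ × ℕ))
    (t := Finset.HasAntidiagonal.antidiagonal n)
    (fun l _ => by
      rw [Finset.mem_coe, Finset.HasAntidiagonal.mem_antidiagonal]
      exact Nat.sub_add_cancel (count_mul_le l (N+1)))]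
  refine Finset.sum_congr rfl (fun ij hij => ?_)
  have hn : ij.1 + ij.2 = n := Finset.HasAntidiagonal.mem_antidiagonal.1 hij
  rw [Finset.filter_filter]
  by_cases hd : (N+1) ∣ ij.2
  · obtain ⟨a, ha⟩ := hd
    rw [if_pos ⟨a, ha⟩, mul_one, cb]
    refine Finset.card_bij'
      (i := fun l hl => ?_) (j := fun m hm => ?_) ?_ ?_ ?_ ?_
    · -- forward map
      refine ⟨l.parts.filter (fun j => ¬ j = N+1), fun {j} hj => l.parts_pos (Multiset.mem_filter.1 hj).1, ?_⟩
      have hl' := (Finset.mem_filter.1 hl).2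
      have hcount : (N+1) * l.parts.count (N+1) = ij.2 := congrArg Prod.snd hl'.2
      have hsplit := Multiset.filter_add_not (fun j => j = N+1) l.parts
      have hsum : (l.parts.filter (fun j => j = N+1)).sum
          + (l.parts.filter (fun j => ¬ j = N+1)).sum = n := by
        rw [← Multiset.sum_add, hsplit, l.parts_sum]
      rw [Multiset.filter_eq', Multiset.sum_replicate, smul_eq_mul, mul_comm] at hsum
      omega
    · -- inverse map
      refine ⟨m.parts + Multiset.replicate a (N+1), fun {j} hj => ?_, ?_⟩
      · rcases Multiset.mem_add.1 hj with h | h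
        · exact m.parts_pos h
        · rw [Multiset.eq_of_mem_replicate h]; omega
      · rw [Multiset.sum_add, Multiset.sum_replicate, smul_eq_mul, m.parts_sum, mul_comm]
        omega
    · -- hi
      intro l hl
      simp only [Finset.mem_filter, Finset.mem_univ, true_and]
      intro j hj
      have h1 := (Multiset.mem_filter.1 hj).1
      have h2 := (Multiset.mem_filter.1 hj).2
      have h3 := (Finset.mem_filter.1 hl).2.1 j h1
      omega
    · -- hj
      intro m hm
      simp only [Finset.mem_filter, Finset.mem_univ, true_and]
      have hmle : ∀ j ∈ m.parts, j ≤ N := (Finset.mem_filter.1 hm).2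
      constructor
      · intro j hj
        rcases Multiset.mem_add.1 hj with h | h
        · exact le_trans (hmle j h) (Nat.le_succ N)
        · rw [Multiset.eq_of_mem_replicate h]
      · have hcnt : (m.parts + Multiset.replicate a (N+1)).count (N+1) = a := by
          rw [Multiset.count_add, Multiset.count_replicate, if_pos rfl,
            Multiset.count_eq_zero.2 (fun h => by have := hmle _ h; omega)]
          omega
        simp only [hcnt, ← ha]
        have h3 : n - ij.2 = ij.1 := by omega
        rw [h3]
    · -- left inverse
      intro l hl
      apply Nat.Partition.ext
      simp only
      have hl' := (Finset.mem_filter.1 hl).2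
      have hcount : (N+1) * l.parts.count (N+1) = ij.2 := congrArg Prod.snd hl'.2
      have hac : a = l.parts.count (N+1) := by
        have : (N+1) * a = (N+1) * l.parts.count (N+1) := by omega
        exact Nat.eq_of_mul_eq_mul_left (Nat.succ_pos N) this
      rw [hac, ← Multiset.filter_eq' l.parts (N+1), add_comm]
      exact Multiset.filter_add_not (fun j => j = N+1) l.parts
    · -- right inverse
      intro m hm
      apply Nat.Partition.ext
      simp only
      have hmle : ∀ j ∈ m.parts, j ≤ N := (Finset.mem_filter.1 hm).2
      rw [Multiset.filter_add]
      have h1 : m.parts.filter (fun j => ¬ j = N+1) = m.parts :=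
        Multiset.filter_eq_self.2 (fun j hj => by have := hmle j hj; omega)
      have h2 : (Multiset.replicate a (N+1)).filter (fun j => ¬ j = N+1) = 0 := by
        rw [Multiset.filter_eq_nil]
        intro j hj
        rw [Multiset.eq_of_mem_replicate hj]
        simp
      rw [h1, h2, add_zero]
  · rw [if_neg hd, mul_zero, Finset.card_eq_zero, Finset.filter_eq_empty_iff]
    intro l _
    rintro ⟨-, hf⟩
    exact hd ⟨l.parts.count (N+1), (congrArg Prod.snd hf).symm⟩



lemma subset_iff_le {t : Finset ℕ} {n : ℕ} (l : Nat.Partition n) :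
    (∀ j ∈ t, j ∈ l.parts) ↔ t.val ≤ l.parts := by
  constructor
  · intro h
    rw [Multiset.le_iff_count]
    intro a
    by_cases ha : a ∈ t
    · calc t.val.count a ≤ 1 := Multiset.nodup_iff_count_le_one.1 t.nodup a
        _ ≤ l.parts.count a := Multiset.one_le_count_iff_mem.2 (h a ha)
    · rw [Multiset.count_eq_zero.2 (fun hc => ha hc)]
      exact Nat.zero_le _
  · intro h j hj
    exact Multiset.mem_of_le h hj

lemma NS_eq (t : Finset ℕ) (ht : ∀ j ∈ t, 0 < j) (n : ℕ) :
    NS t n = if t.sum id ≤ n then Fintype.card (Nat.Partition (n - t.sum id)) else 0 := by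
  classical
  have hsum : t.val.sum = t.sum id := by
    rw [Finset.sum, Multiset.map_id]
  by_cases h : t.sum id ≤ n
  · rw [if_pos h, NS, ← Finset.card_univ]
    refine Finset.card_bij'
      (i := fun l hl => ?_) (j := fun m _ => ?_) (fun _ _ => Finset.mem_univ _)
      ?_ ?_ ?_
    · -- forward: remove one copy of each element of t
      refine ⟨l.parts - t.val, fun {j} hj => l.parts_pos (Multiset.mem_of_le (Multiset.sub_le_self _ _) hj), ?_⟩
      have hle : t.val ≤ l.parts := (subset_iff_le l).1 (Finset.mem_filter.1 hl).2
      have h1 : (l.parts - t.val) + t.val = l.parts := tsub_add_cancel_of_le hle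
      have h2 : (l.parts - t.val).sum + t.val.sum = n := by
        rw [← Multiset.sum_add, h1, l.parts_sum]
      omega
    · -- inverse: add one copy of each element of t
      refine ⟨m.parts + t.val, fun {j} hj => ?_, ?_⟩
      · rcases Multiset.mem_add.1 hj with hc | hc
        · exact m.parts_pos hc
        · exact ht j hc
      · rw [Multiset.sum_add, m.parts_sum, hsum]
        omega
    · -- hj : inverse lands in the filter
      intro m _
      simp only [Finset.mem_filter, Finset.mem_univ, true_and]
      intro j hj
      exact Multiset.mem_add.2 (Or.inr hj)
    · -- left inverse
      intro l hl
      apply Nat.Partition.ext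
      simp only
      exact tsub_add_cancel_of_le ((subset_iff_le l).1 (Finset.mem_filter.1 hl).2)
    · -- right inverse
      intro m _
      apply Nat.Partition.ext
      simp only
      exact add_tsub_cancel_right _ _
  · rw [if_neg h, NS, Finset.card_eq_zero, Finset.filter_eq_empty_iff]
    intro l _ hc
    have hle : t.val ≤ l.parts := (subset_iff_le l).1 hc
    have := msum_le hle
    rw [hsum, l.parts_sum] at this
    exact h this

section Analytic
variable {x : ℝ}

lemma hasSum_cb (hx0 : 0 < x) (hx1 : x < 1) (N : ℕ) :
    HasSum (fun n => (cb N n : ℝ) * x ^ n) (∏ k ∈ Finset.range N, (1 - x ^ (k+1))⁻¹) := by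
  induction N with
  | zero =>
    simp only [Finset.range_zero, Finset.prod_empty]
    have h : (fun n => (cb 0 n : ℝ) * x ^ n) = fun n => if n = 0 then 1 else 0 := by
      funext n
      rw [cb_zero]
      rcases eq_or_ne n 0 with rfl | hn
      · simp
      · simp [hn]
    rw [h]
    exact hasSum_ite_eq 0 1
  | succ N ih =>
    have hxN : (0:ℝ) ≤ x ^ (N+1) := le_of_lt (pow_pos hx0 _)
    have hxN1 : x ^ (N+1) < 1 := pow_lt_one₀ (le_of_lt hx0) hx1 (Nat.succ_ne_zero N)
    have hgeo : HasSum (fun a : ℕ => x ^ ((N+1) * a)) ((1 - x ^ (N+1))⁻¹) := by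
      have h := hasSum_geometric_of_lt_one hxN hxN1
      simpa [← pow_mul] using h
    have hind : HasSum (fun n : ℕ => (if (N+1) ∣ n then (1:ℝ) else 0) * x ^ n)
        ((1 - x ^ (N+1))⁻¹) := by
      have hinj : Function.Injective (fun a : ℕ => (N+1) * a) := fun a b h => by
        simpa using Nat.eq_of_mul_eq_mul_left (Nat.succ_pos N) h
      refine (Function.Injective.hasSum_iff hinj ?_).1 ?_
      · intro n hn
        have hnd : ¬ (N+1) ∣ n := fun ⟨a, ha⟩ => hn ⟨a, ha.symm⟩
        simp [hnd]
      · have h : ((fun n : ℕ => (if (N+1) ∣ n then (1:ℝ) else 0) * x ^ n) ∘ (fun a => (N+1)*a))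
            = fun a : ℕ => x ^ ((N+1)*a) := by
          funext a
          simp only [Function.comp_apply]
          rw [if_pos ⟨a, rfl⟩, one_mul]
        rw [h]
        exact hgeo
    have hfnn : ∀ n : ℕ, 0 ≤ (cb N n : ℝ) * x ^ n :=
      fun n => mul_nonneg (Nat.cast_nonneg _) (pow_nonneg hx0.le n)
    have hgnn : ∀ n : ℕ, 0 ≤ (if (N+1) ∣ n then (1:ℝ) else 0) * x ^ n := fun n =>
      mul_nonneg (by positivity) (pow_nonneg hx0.le n)
    have hf : Summable fun n => ‖(cb N n : ℝ) * x ^ n‖ := by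
      have h : (fun n => ‖(cb N n : ℝ) * x ^ n‖) = fun n => (cb N n : ℝ) * x ^ n :=
        funext fun n => abs_of_nonneg (hfnn n)
      rw [h]; exact ih.summable
    have hg : Summable fun n => ‖(if (N+1) ∣ n then (1:ℝ) else 0) * x ^ n‖ := by
      have h : (fun n => ‖(if (N+1) ∣ n then (1:ℝ) else 0) * x ^ n‖)
          = fun n => (if (N+1) ∣ n then (1:ℝ) else 0) * x ^ n :=
        funext fun n => abs_of_nonneg (hgnn n)
      rw [h]; exact hind.summable
    have hfg := summable_mul_of_summable_norm hf hg
    have hform : ∀ n : ℕ, (∑ kl ∈ Finset.HasAntidiagonal.antidiagonal n,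
        ((cb N kl.1 : ℝ) * x ^ kl.1) * ((if (N+1) ∣ kl.2 then (1:ℝ) else 0) * x ^ kl.2))
        = (cb (N+1) n : ℝ) * x ^ n := by
      intro n
      rw [cb_succ]
      push_cast
      rw [Finset.sum_mul]
      refine Finset.sum_congr rfl fun kl hkl => ?_
      have hkl' : kl.1 + kl.2 = n := Finset.HasAntidiagonal.mem_antidiagonal.1 hkl
      rw [← hkl', pow_add]
      ring
    have hS : Summable (fun n => (cb (N+1) n : ℝ) * x ^ n) :=
      (summable_sum_mul_antidiagonal_of_summable_mul
        (f := fun n => (cb N n : ℝ) * x ^ n)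
        (g := fun n => (if (N+1) ∣ n then (1:ℝ) else 0) * x ^ n) hfg).congr hform
    have heq := Summable.tsum_mul_tsum_eq_tsum_sum_antidiagonal
      (f := fun n => (cb N n : ℝ) * x ^ n)
      (g := fun n => (if (N+1) ∣ n then (1:ℝ) else 0) * x ^ n)
      ih.summable hind.summable hfg
    rw [ih.tsum_eq, hind.tsum_eq] at heq
    rw [Finset.prod_range_succ]
    refine hS.hasSum_iff.2 ?_
    rw [tsum_congr (fun n => (hform n).symm), ← heq]

lemma prod_cb_le (hx0 : 0 < x) (hx1 : x < 1) (N : ℕ) :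
    (∏ k ∈ Finset.range N, (1 - x ^ (k+1))⁻¹) ≤ Real.exp (x * (1-x)⁻¹ * (1-x)⁻¹) := by
  have hx1' : (0:ℝ) < 1 - x := by linarith
  have hpos : ∀ k : ℕ, (0:ℝ) < 1 - x ^ (k+1) := fun k => by
    have h := pow_lt_one₀ (n := k+1) hx0.le hx1 (by omega); linarith
  have hfac : ∀ k : ℕ, (1 - x ^ (k+1))⁻¹ ≤ Real.exp (x ^ (k+1) * (1-x)⁻¹) := by
    intro k
    have h2 : x ^ (k+1) ≤ x := by
      simpa using pow_le_pow_of_le_one hx0.le hx1.le (Nat.one_le_iff_ne_zero.2 (Nat.succ_ne_zero k))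
    have key : (1 - x ^ (k+1))⁻¹ ≤ 1 + x ^ (k+1) * (1-x)⁻¹ := by
      have hne : (1 - x ^ (k+1)) ≠ 0 := (hpos k).ne'
      have heq : (1 - x ^ (k+1))⁻¹ = 1 + x ^ (k+1) * (1 - x ^ (k+1))⁻¹ := by
        field_simp
        ring
      rw [heq]
      have hmono : (1 - x ^ (k+1))⁻¹ ≤ (1 - x)⁻¹ :=
        inv_anti₀ hx1' (by linarith)
      nlinarith [pow_pos hx0 (k+1)]
    calc (1 - x ^ (k+1))⁻¹ ≤ 1 + x ^ (k+1) * (1-x)⁻¹ := key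
      _ = x ^ (k+1) * (1-x)⁻¹ + 1 := by ring
      _ ≤ Real.exp (x ^ (k+1) * (1-x)⁻¹) := Real.add_one_le_exp _
  calc (∏ k ∈ Finset.range N, (1 - x ^ (k+1))⁻¹)
      ≤ ∏ k ∈ Finset.range N, Real.exp (x ^ (k+1) * (1-x)⁻¹) :=
        Finset.prod_le_prod (fun k _ => le_of_lt (inv_pos.2 (hpos k))) (fun k _ => hfac k)
    _ = Real.exp (∑ k ∈ Finset.range N, x ^ (k+1) * (1-x)⁻¹) := (Real.exp_sum _ _).symm
    _ ≤ Real.exp (x * (1-x)⁻¹ * (1-x)⁻¹) := by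
        apply Real.exp_le_exp.2
        rw [← Finset.sum_mul]
        apply mul_le_mul_of_nonneg_right ?_ (le_of_lt (inv_pos.2 hx1'))
        have h1 : ∑ k ∈ Finset.range N, x ^ (k+1) = x * ∑ k ∈ Finset.range N, x ^ k := by
          rw [Finset.mul_sum]
          exact Finset.sum_congr rfl fun k _ => pow_succ' x k
        rw [h1]
        apply mul_le_mul_of_nonneg_left ?_ hx0.le
        calc (∑ k ∈ Finset.range N, x ^ k) ≤ ∑' k : ℕ, x ^ k :=
              Summable.sum_le_tsum _ (fun k _ => pow_nonneg hx0.le k)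
                (summable_geometric_of_lt_one hx0.le hx1)
          _ = (1-x)⁻¹ := tsum_geometric_of_lt_one hx0.le hx1

lemma summable_p (hx0 : 0 < x) (hx1 : x < 1) :
    Summable (fun n => (Fintype.card (Nat.Partition n) : ℝ) * x ^ n) := by
  apply summable_of_sum_range_le
    (c := Real.exp (x * (1-x)⁻¹ * (1-x)⁻¹))
    (fun n => mul_nonneg (Nat.cast_nonneg _) (pow_nonneg hx0.le n))
  intro N
  have h1 : ∑ n ∈ Finset.range N, (Fintype.card (Nat.Partition n) : ℝ) * x ^ n
      = ∑ n ∈ Finset.range N, (cb N n : ℝ) * x ^ n :=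
    Finset.sum_congr rfl fun n hn => by
      rw [cb_eq_card (le_of_lt (Finset.mem_range.1 hn))]
  rw [h1]
  calc (∑ n ∈ Finset.range N, (cb N n : ℝ) * x ^ n)
      ≤ ∑' n, (cb N n : ℝ) * x ^ n :=
        Summable.sum_le_tsum _ (fun n _ => mul_nonneg (Nat.cast_nonneg _) (pow_nonneg hx0.le n))
          (hasSum_cb hx0 hx1 N).summable
    _ = ∏ k ∈ Finset.range N, (1 - x ^ (k+1))⁻¹ := (hasSum_cb hx0 hx1 N).tsum_eq
    _ ≤ _ := prod_cb_le hx0 hx1 N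

lemma prod_le_G (hx0 : 0 < x) (hx1 : x < 1) (N : ℕ) :
    (∏ k ∈ Finset.range N, (1 - x ^ (k+1))⁻¹)
      ≤ ∑' n, (Fintype.card (Nat.Partition n) : ℝ) * x ^ n := by
  rw [← (hasSum_cb hx0 hx1 N).tsum_eq]
  refine Summable.tsum_le_tsum (fun n => ?_) (hasSum_cb hx0 hx1 N).summable (summable_p hx0 hx1)
  have := cb_le N n
  have hxn : (0:ℝ) ≤ x ^ n := pow_nonneg hx0.le n
  exact mul_le_mul_of_nonneg_right (by exact_mod_cast this) hxn

lemma tendsto_prod (hx0 : 0 < x) (hx1 : x < 1) :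
    Filter.Tendsto (fun N => ∏ k ∈ Finset.range N, (1 - x ^ (k+1))⁻¹) Filter.atTop
      (nhds (∑' n, (Fintype.card (Nat.Partition n) : ℝ) * x ^ n)) := by
  set G := ∑' n, (Fintype.card (Nat.Partition n) : ℝ) * x ^ n with hG
  apply tendsto_of_tendsto_of_tendsto_of_le_of_le
    (g := fun N => ∑ n ∈ Finset.range (N+1), (Fintype.card (Nat.Partition n) : ℝ) * x ^ n)
    (h := fun _ => G)
  · exact ((summable_p hx0 hx1).hasSum.tendsto_sum_nat).comp (Filter.tendsto_add_atTop_nat 1)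
  · exact tendsto_const_nhds
  · intro N
    show (∑ n ∈ Finset.range (N+1), (Fintype.card (Nat.Partition n) : ℝ) * x ^ n)
        ≤ ∏ k ∈ Finset.range N, (1 - x ^ (k+1))⁻¹
    have h1 : ∑ n ∈ Finset.range (N+1), (Fintype.card (Nat.Partition n) : ℝ) * x ^ n
        = ∑ n ∈ Finset.range (N+1), (cb N n : ℝ) * x ^ n :=
      Finset.sum_congr rfl fun n hn => by
        rw [cb_eq_card (Nat.lt_succ_iff.1 (Finset.mem_range.1 hn))]
    rw [h1, ← (hasSum_cb hx0 hx1 N).tsum_eq]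
    exact Summable.sum_le_tsum _ (fun n _ => mul_nonneg (Nat.cast_nonneg _) (pow_nonneg hx0.le n))
      (hasSum_cb hx0 hx1 N).summable
  · intro N
    show (∏ k ∈ Finset.range N, (1 - x ^ (k+1))⁻¹) ≤ G
    exact prod_le_G hx0 hx1 N

lemma hasProd_euler (hx0 : 0 < x) (hx1 : x < 1) :
    HasProd (fun k : ℕ+ => (1 - x ^ (k:ℕ))⁻¹)
      (∑' n, (Fintype.card (Nat.Partition n) : ℝ) * x ^ n) := by
  have hfac1 : ∀ k : ℕ+, 1 ≤ (1 - x ^ (k:ℕ))⁻¹ := by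
    intro k
    have hk : ((k:ℕ) : ℕ) ≠ 0 := by exact_mod_cast k.pos.ne'
    have h1 : (0:ℝ) < 1 - x ^ (k:ℕ) := by
      have := pow_lt_one₀ hx0.le hx1 hk; linarith
    have h2 : 1 - x ^ (k:ℕ) ≤ 1 := by
      have := pow_pos hx0 (k:ℕ); linarith
    exact one_le_inv_iff₀.2 ⟨h1, h2⟩
  have hinj : Function.Injective (fun k : ℕ => Nat.succPNat k) := by
    intro a b h
    have h2 := congrArg (fun i : ℕ+ => (i:ℕ)) h
    simpa [Nat.succPNat_coe] using h2
  have himage : ∀ N : ℕ, (∏ i ∈ (Finset.range N).image (fun k => Nat.succPNat k),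
      (1 - x ^ (i:ℕ))⁻¹) = ∏ k ∈ Finset.range N, (1 - x ^ (k+1))⁻¹ := by
    intro N
    rw [Finset.prod_image (fun a _ b _ h => hinj h)]
    exact Finset.prod_congr rfl fun k _ => by rw [Nat.succPNat_coe]
  have hmono : Monotone (fun u : Finset ℕ+ => ∏ i ∈ u, (1 - x ^ (i:ℕ))⁻¹) := by
    intro u v huv
    have h0 : (0:ℝ) ≤ ∏ i ∈ u, (1 - x ^ (i:ℕ))⁻¹ :=
      Finset.prod_nonneg (fun i _ => le_trans zero_le_one (hfac1 i))
    have h1 : (1:ℝ) ≤ ∏ i ∈ v \ u, (1 - x ^ (i:ℕ))⁻¹ := by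
      calc (1:ℝ) = ∏ _i ∈ v \ u, 1 := (Finset.prod_const_one).symm
        _ ≤ ∏ i ∈ v \ u, (1 - x ^ (i:ℕ))⁻¹ :=
          Finset.prod_le_prod (fun i _ => zero_le_one) (fun i _ => hfac1 i)
    calc (∏ i ∈ u, (1 - x ^ (i:ℕ))⁻¹)
        = (∏ i ∈ u, (1 - x ^ (i:ℕ))⁻¹) * 1 := (mul_one _).symm
      _ ≤ (∏ i ∈ u, (1 - x ^ (i:ℕ))⁻¹) * ∏ i ∈ v \ u, (1 - x ^ (i:ℕ))⁻¹ :=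
          mul_le_mul_of_nonneg_left h1 h0
      _ = ∏ i ∈ v, (1 - x ^ (i:ℕ))⁻¹ := by
          rw [mul_comm, Finset.prod_sdiff huv]
  refine tendsto_atTop_isLUB hmono ?_
  constructor
  · rintro _ ⟨u, rfl⟩
    set N := u.sup (fun i : ℕ+ => (i:ℕ)) with hN
    have hsub : u ⊆ (Finset.range N).image (fun k => Nat.succPNat k) := by
      intro i hi
      simp only [Finset.mem_image, Finset.mem_range]
      have h1 : (i:ℕ) ≤ N := Finset.le_sup (f := fun i : ℕ+ => (i:ℕ)) hi
      have h2 : 1 ≤ (i:ℕ) := i.pos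
      refine ⟨(i:ℕ) - 1, by omega, ?_⟩
      apply PNat.coe_inj.1
      rw [Nat.succPNat_coe]
      omega
    calc (∏ i ∈ u, (1 - x ^ (i:ℕ))⁻¹)
        ≤ ∏ i ∈ (Finset.range N).image (fun k => Nat.succPNat k),
            (1 - x ^ (i:ℕ))⁻¹ :=
          hmono hsub
      _ = ∏ k ∈ Finset.range N, (1 - x ^ (k+1))⁻¹ := himage N
      _ ≤ _ := prod_le_G hx0 hx1 N
  · intro b hb
    refine le_of_tendsto' (tendsto_prod hx0 hx1) (fun N => ?_)
    apply hb
    exact ⟨(Finset.range N).image (fun k => Nat.succPNat k), himage N⟩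

end Analytic

section PerN

lemma sum_pow_eq (m : ℕ) (y : ℂ) (n : ℕ) :
    (∑ lam : Nat.Partition n, y ^ ((lam.parts.toFinset.filter (fun j => j ≤ m)).card))
    = ∑ t ∈ (Finset.Icc 1 m).powerset, (y-1)^t.card * (NS t n : ℂ) := by
  classical
  have step1 : ∀ lam : Nat.Partition n,
      y ^ ((lam.parts.toFinset.filter (fun j => j ≤ m)).card)
      = ∑ t ∈ (Finset.Icc 1 m).powerset,
          (y-1)^t.card * (if ∀ j ∈ t, j ∈ lam.parts then (1:ℂ) else 0) := by
    intro lam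
    have hset : lam.parts.toFinset.filter (fun j => j ≤ m)
        = (Finset.Icc 1 m).filter (fun j => j ∈ lam.parts) := by
      ext j
      simp only [Finset.mem_filter, Multiset.mem_toFinset, Finset.mem_Icc]
      constructor
      · rintro ⟨h1, h2⟩
        exact ⟨⟨lam.parts_pos h1, h2⟩, h1⟩
      · rintro ⟨⟨_, h2⟩, h3⟩
        exact ⟨h3, h2⟩
    rw [hset]
    have h1 : y ^ (((Finset.Icc 1 m).filter (fun j => j ∈ lam.parts)).card)
        = ∏ j ∈ Finset.Icc 1 m, (if j ∈ lam.parts then y else 1) := by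
      rw [Finset.prod_ite (fun _ => y) (fun _ => (1:ℂ)), Finset.prod_const, Finset.prod_const,
        one_pow, mul_one]
    rw [h1]
    have h2 : ∀ j, (if j ∈ lam.parts then y else (1:ℂ))
        = (y-1) * (if j ∈ lam.parts then 1 else 0) + 1 := by
      intro j
      split <;> ring
    rw [Finset.prod_congr rfl (fun j _ => h2 j), Finset.prod_add]
    refine Finset.sum_congr rfl (fun t ht => ?_)
    rw [Finset.prod_const_one, mul_one, Finset.prod_mul_distrib, Finset.prod_const,
      Finset.prod_boole]
  rw [Finset.sum_congr rfl (fun lam _ => step1 lam), Finset.sum_comm]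
  refine Finset.sum_congr rfl (fun t ht => ?_)
  rw [← Finset.mul_sum, Finset.sum_boole]
  rfl

lemma sum_Ysn_eq (m n : ℕ) :
    (∑ lam : Nat.Partition n, (((lam.parts.toFinset.filter (fun j => j ≤ m)).card : ℕ) : ℝ))
    = ∑ j ∈ Finset.Icc 1 m, (NS {j} n : ℝ) := by
  classical
  have step1 : ∀ lam : Nat.Partition n,
      (((lam.parts.toFinset.filter (fun j => j ≤ m)).card : ℕ) : ℝ)
      = ∑ j ∈ Finset.Icc 1 m, (if j ∈ lam.parts then (1:ℝ) else 0) := by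
    intro lam
    have hset : lam.parts.toFinset.filter (fun j => j ≤ m)
        = (Finset.Icc 1 m).filter (fun j => j ∈ lam.parts) := by
      ext j
      simp only [Finset.mem_filter, Multiset.mem_toFinset, Finset.mem_Icc]
      constructor
      · rintro ⟨h1, h2⟩
        exact ⟨⟨lam.parts_pos h1, h2⟩, h1⟩
      · rintro ⟨⟨_, h2⟩, h3⟩
        exact ⟨h3, h2⟩
    rw [hset, Finset.card_filter]
    push_cast
    rfl
  rw [Finset.sum_congr rfl (fun lam _ => step1 lam), Finset.sum_comm]
  refine Finset.sum_congr rfl (fun j hj => ?_)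
  rw [Finset.sum_boole]
  congr 1
  rw [NS]
  congr 1
  apply Finset.filter_congr
  intro lam _
  simp

end PerN

section Shift
variable {x : ℝ}

lemma hasSum_NS (hx0 : 0 < x) (hx1 : x < 1) (t : Finset ℕ) (ht : ∀ j ∈ t, 0 < j) :
    HasSum (fun n : ℕ => (NS t n : ℝ) * x ^ n)
      (x ^ (t.sum id) * ∑' n, (Fintype.card (Nat.Partition n) : ℝ) * x ^ n) := by
  have h1 := (summable_p hx0 hx1).hasSum.mul_left (x ^ (t.sum id))
  have h2 : ∀ n : ℕ, NS t (n + t.sum id) = Fintype.card (Nat.Partition n) := by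
    intro n
    rw [NS_eq t ht, if_pos (Nat.le_add_left _ _), Nat.add_sub_cancel]
  refine (Function.Injective.hasSum_iff (g := fun n : ℕ => n + t.sum id)
    (fun a b h => by
      have h' : a + t.sum id = b + t.sum id := h
      omega) ?_).1 ?_
  · intro n hn
    have hl : n < t.sum id := by
      by_contra h
      exact hn ⟨n - t.sum id, by
        show n - t.sum id + t.sum id = n
        omega⟩
    rw [NS_eq t ht, if_neg (by omega), Nat.cast_zero, zero_mul]
  · have heq : ((fun n => (NS t n : ℝ) * x ^ n) ∘ fun n : ℕ => n + t.sum id)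
        = fun n : ℕ => x ^ (t.sum id) * ((Fintype.card (Nat.Partition n) : ℝ) * x ^ n) := by
      funext n
      simp only [Function.comp_apply]
      rw [h2 n, pow_add]
      ring
    rw [heq]
    exact h1

lemma hasSum_NS_complex (hx0 : 0 < x) (hx1 : x < 1) (t : Finset ℕ) (ht : ∀ j ∈ t, 0 < j) :
    HasSum (fun n : ℕ => (NS t n : ℂ) * (x:ℂ) ^ n)
      ((x:ℂ) ^ (t.sum id)
        * ((∑' n, (Fintype.card (Nat.Partition n) : ℝ) * x ^ n : ℝ) : ℂ)) := by
  have h := Complex.ofRealCLM.hasSum (hasSum_NS hx0 hx1 t ht)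
  have heq : (fun n : ℕ => Complex.ofRealCLM ((NS t n : ℝ) * x ^ n))
      = fun n : ℕ => (NS t n : ℂ) * (x:ℂ) ^ n := by
    funext n
    simp only [Complex.ofRealCLM_apply]
    push_cast
    ring
  rw [heq] at h
  convert h using 1
  simp only [Complex.ofRealCLM_apply]
  push_cast
  ring

end Shift

lemma tsum_pnat_eq {α : Type*} [AddCommGroup α] [TopologicalSpace α] [IsTopologicalAddGroup α]
    [T2Space α] (f : ℕ → α) (hf : Summable f) :
    ∑' n : ℕ, f n = f 0 + ∑' n : ℕ+, f (n : ℕ) := by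
  rw [Summable.tsum_eq_zero_add hf]
  congr 1
  have h := Equiv.tsum_eq Equiv.pnatEquivNat.symm (fun n : ℕ+ => f (n : ℕ))
  rw [← h]
  refine tsum_congr (fun k => ?_)
  congr 1

end PgfAux

/-- For `0 < x < 1`, `s ≥ 1`:
`1 + ∑_{n≥1} p(n) xⁿ E(y^{Y_{s,n}}) = g(x) ∏_{1≤j≤⌊s⌋} (1 + (y−1)xʲ)` for `‖y‖ ≤ 1`, and
`∑_{n≥1} p(n) xⁿ E(Y_{s,n}) = g(x)(1−x^{⌊s⌋+1})/(1−x) − g(x)`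
(the extra `−g(x)` accounts for the `n = 0` term). -/
theorem pgf_and_expectation_Ysn (x : ℝ) (hx0 : 0 < x) (hx1 : x < 1) (s : ℝ) (hs : 1 ≤ s) :
    (∀ y : ℂ, ‖y‖ ≤ 1 →
      1 + ∑' n : ℕ+, (Fintype.card (Nat.Partition (n : ℕ)) : ℂ) * (x : ℂ) ^ (n : ℕ) *
          ((Fintype.card (Nat.Partition (n : ℕ)) : ℂ)⁻¹ *
            ∑ lam : Nat.Partition (n : ℕ), y ^ Ysn s lam)
        = (∏' k : ℕ+, (1 - (x : ℂ) ^ (k : ℕ))⁻¹) *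
          ∏ j ∈ Finset.Icc 1 ⌊s⌋₊, (1 + (y - 1) * (x : ℂ) ^ j)) ∧
    ∑' n : ℕ+, (Fintype.card (Nat.Partition (n : ℕ)) : ℝ) * x ^ (n : ℕ) *
        ((Fintype.card (Nat.Partition (n : ℕ)) : ℝ)⁻¹ *
          ∑ lam : Nat.Partition (n : ℕ), (Ysn s lam : ℝ))
      = (∏' k : ℕ+, (1 - x ^ (k : ℕ))⁻¹) * (1 - x ^ (⌊s⌋₊ + 1)) / (1 - x)
        - ∏' k : ℕ+, (1 - x ^ (k : ℕ))⁻¹ := by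
  classical
  have hGprod : HasProd (fun k : ℕ+ => (1 - x ^ (k:ℕ))⁻¹)
      (∑' n, (Fintype.card (Nat.Partition n) : ℝ) * x ^ n) := PgfAux.hasProd_euler hx0 hx1
  set G : ℝ := ∑' n, (Fintype.card (Nat.Partition n) : ℝ) * x ^ n with hG
  have hGprod_eq : (∏' k : ℕ+, (1 - x ^ (k:ℕ))⁻¹) = G := hGprod.tprod_eq
  have hGprodC : HasProd (fun k : ℕ+ => (1 - (x:ℂ) ^ (k:ℕ))⁻¹) ((G : ℝ) : ℂ) := by
    have h2 := (Complex.continuous_ofReal.tendsto G).comp hGprod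
    refine Filter.Tendsto.congr ?_ h2
    intro u
    simp only [Function.comp_apply, Complex.ofReal_prod]
    push_cast
    rfl
  have hGprodC_eq : (∏' k : ℕ+, (1 - (x:ℂ) ^ (k:ℕ))⁻¹) = ((G:ℝ):ℂ) := hGprodC.tprod_eq
  constructor
  · intro y hy
    set m := ⌊s⌋₊ with hm
    set F : ℕ → ℂ := fun n => (x:ℂ)^n * ∑ lam : Nat.Partition n, y ^ Ysn s lam with hF
    have hFeq : ∀ n : ℕ, F n = ∑ t ∈ (Finset.Icc 1 m).powerset,
        (y-1)^t.card * ((PgfAux.NS t n : ℂ) * (x:ℂ)^n) := by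
      intro n
      have h0 : (∑ lam : Nat.Partition n, y ^ Ysn s lam)
          = ∑ t ∈ (Finset.Icc 1 m).powerset, (y-1)^t.card * (PgfAux.NS t n : ℂ) :=
        PgfAux.sum_pow_eq m y n
      rw [hF]
      simp only
      rw [h0, Finset.mul_sum]
      exact Finset.sum_congr rfl fun t _ => by ring
    have hhs : HasSum F (∑ t ∈ (Finset.Icc 1 m).powerset,
        (y-1)^t.card * ((x:ℂ)^(t.sum id) * ((G:ℝ):ℂ))) := by
      rw [show F = (fun n => ∑ t ∈ (Finset.Icc 1 m).powerset,
        (y-1)^t.card * ((PgfAux.NS t n : ℂ) * (x:ℂ)^n)) from funext hFeq]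
      refine hasSum_sum (fun t ht => ?_)
      have htpos : ∀ j ∈ t, 0 < j := fun j hj => by
        have := Finset.mem_Icc.1 (Finset.mem_powerset.1 ht hj)
        omega
      exact (PgfAux.hasSum_NS_complex hx0 hx1 t htpos).mul_left _
    have hF0 : F 0 = 1 := by
      rw [hF]
      simp only [pow_zero, one_mul]
      have hone : ∀ lam : Nat.Partition 0, y ^ Ysn s lam = 1 := fun lam => by
        have hp := PgfAux.partition_zero_parts lam
        have hz : Ysn s lam = 0 := by simp [Ysn, hp]
        rw [hz, pow_zero]
      calc (∑ lam : Nat.Partition 0, y ^ Ysn s lam)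
          = ∑ _lam : Nat.Partition 0, (1:ℂ) := Finset.sum_congr rfl fun l _ => hone l
        _ = (Fintype.card (Nat.Partition 0) : ℂ) := by
            rw [Finset.sum_const, Finset.card_univ]
            simp
        _ = 1 := by rw [PgfAux.card_partition_zero, Nat.cast_one]
    have hLHS : ∀ n : ℕ+, (Fintype.card (Nat.Partition (n:ℕ)) : ℂ) * (x:ℂ) ^ (n:ℕ) *
        ((Fintype.card (Nat.Partition (n:ℕ)) : ℂ)⁻¹ *
          ∑ lam : Nat.Partition (n:ℕ), y ^ Ysn s lam) = F (n:ℕ) := by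
      intro n
      have hc : (Fintype.card (Nat.Partition (n:ℕ)) : ℂ) ≠ 0 :=
        Nat.cast_ne_zero.2 (PgfAux.card_partition_pos _).ne'
      rw [hF]
      simp only
      field_simp
    have hprod : (∏ j ∈ Finset.Icc 1 m, (1 + (y - 1) * (x:ℂ)^j))
        = ∑ t ∈ (Finset.Icc 1 m).powerset, (y-1)^t.card * (x:ℂ)^(t.sum id) := by
      have h1 : ∀ j ∈ Finset.Icc 1 m, (1 + (y-1)*(x:ℂ)^j) = ((y-1)*(x:ℂ)^j + 1) :=
        fun j _ => by ring
      rw [Finset.prod_congr rfl h1, Finset.prod_add]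
      refine Finset.sum_congr rfl fun t ht => ?_
      rw [Finset.prod_const_one, mul_one, Finset.prod_mul_distrib, Finset.prod_const,
        Finset.prod_pow_eq_pow_sum]
      rfl
    have hval : (∑ t ∈ (Finset.Icc 1 m).powerset,
        (y-1)^t.card * ((x:ℂ)^(t.sum id) * ((G:ℝ):ℂ)))
        = ((G:ℝ):ℂ) * ∏ j ∈ Finset.Icc 1 m, (1 + (y - 1) * (x:ℂ)^j) := by
      rw [hprod, Finset.mul_sum]
      exact Finset.sum_congr rfl fun t _ => by ring
    calc 1 + ∑' n : ℕ+, (Fintype.card (Nat.Partition (n:ℕ)) : ℂ) * (x:ℂ) ^ (n:ℕ) *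
          ((Fintype.card (Nat.Partition (n:ℕ)) : ℂ)⁻¹ *
            ∑ lam : Nat.Partition (n:ℕ), y ^ Ysn s lam)
        = 1 + ∑' n : ℕ+, F (n:ℕ) := by rw [tsum_congr hLHS]
      _ = F 0 + ∑' n : ℕ+, F (n:ℕ) := by rw [hF0]
      _ = ∑' n : ℕ, F n := (PgfAux.tsum_pnat_eq F hhs.summable).symm
      _ = ∑ t ∈ (Finset.Icc 1 m).powerset,
            (y-1)^t.card * ((x:ℂ)^(t.sum id) * ((G:ℝ):ℂ)) := hhs.tsum_eq
      _ = ((G:ℝ):ℂ) * ∏ j ∈ Finset.Icc 1 m, (1 + (y - 1) * (x:ℂ)^j) := hval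
      _ = (∏' k : ℕ+, (1 - (x:ℂ) ^ (k:ℕ))⁻¹) * ∏ j ∈ Finset.Icc 1 m, (1 + (y - 1) * (x:ℂ)^j) := by
          rw [hGprodC_eq]
  · set m := ⌊s⌋₊ with hm
    set F : ℕ → ℝ := fun n => x^n * ∑ lam : Nat.Partition n, (Ysn s lam : ℝ) with hF
    have hFeq : ∀ n : ℕ, F n = ∑ j ∈ Finset.Icc 1 m, (PgfAux.NS {j} n : ℝ) * x ^ n := by
      intro n
      have h0 : (∑ lam : Nat.Partition n, (Ysn s lam : ℝ))
          = ∑ j ∈ Finset.Icc 1 m, (PgfAux.NS {j} n : ℝ) := PgfAux.sum_Ysn_eq m n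
      rw [hF]
      simp only
      rw [h0, Finset.mul_sum]
      exact Finset.sum_congr rfl fun j _ => by ring
    have hhs : HasSum F (∑ j ∈ Finset.Icc 1 m, x^j * G) := by
      rw [show F = (fun n => ∑ j ∈ Finset.Icc 1 m, (PgfAux.NS {j} n : ℝ) * x ^ n)
        from funext hFeq]
      refine hasSum_sum (fun j hj => ?_)
      have hjpos : ∀ i ∈ ({j} : Finset ℕ), 0 < i := by
        intro i hi
        rw [Finset.mem_singleton] at hi
        subst hi
        have := Finset.mem_Icc.1 hj
        omega
      have h := PgfAux.hasSum_NS hx0 hx1 {j} hjpos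
      rw [Finset.sum_singleton] at h
      exact h
    have hF0 : F 0 = 0 := by
      rw [hF]
      simp only
      have hz : ∀ lam : Nat.Partition 0, (Ysn s lam : ℝ) = 0 := fun lam => by
        simp [Ysn, PgfAux.partition_zero_parts lam]
      rw [Finset.sum_congr rfl (fun l _ => hz l)]
      simp
    have hLHS : ∀ n : ℕ+, (Fintype.card (Nat.Partition (n:ℕ)) : ℝ) * x ^ (n:ℕ) *
        ((Fintype.card (Nat.Partition (n:ℕ)) : ℝ)⁻¹ *
          ∑ lam : Nat.Partition (n:ℕ), (Ysn s lam : ℝ)) = F (n:ℕ) := by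
      intro n
      have hc : (Fintype.card (Nat.Partition (n:ℕ)) : ℝ) ≠ 0 :=
        Nat.cast_ne_zero.2 (PgfAux.card_partition_pos _).ne'
      rw [hF]
      simp only
      field_simp
    have hval : (∑ j ∈ Finset.Icc 1 m, x^j * G) = G * (1 - x^(m+1))/(1-x) - G := by
      have hxne : x ≠ 1 := ne_of_lt hx1
      have h0 := geom_sum_eq hxne (m+1)
      have h2 : ∑ i ∈ Finset.range (m+1), x^i = 1 + ∑ j ∈ Finset.Icc 1 m, x^j := by
        rw [Finset.sum_range_succ' (fun i => x^i) m, pow_zero, add_comm]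
        congr 1
        rw [show Finset.Icc 1 m = Finset.Ico 1 (m+1) from (Finset.Ico_add_one_right_eq_Icc 1 m).symm,
          Finset.sum_Ico_eq_sum_range]
        simp only [Nat.add_sub_cancel]
        exact Finset.sum_congr rfl fun k _ => by rw [add_comm]
      have h3 : ∑ j ∈ Finset.Icc 1 m, x^j = (x^(m+1) - 1)/(x-1) - 1 := by
        rw [← h0, h2]
        ring
      have hxne' : x - 1 ≠ 0 := sub_ne_zero.2 hxne
      have hxne'' : (1:ℝ) - x ≠ 0 := fun h => hxne (by linarith)
      rw [← Finset.sum_mul, h3]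
      field_simp
      ring
    calc (∑' n : ℕ+, (Fintype.card (Nat.Partition (n:ℕ)) : ℝ) * x ^ (n:ℕ) *
          ((Fintype.card (Nat.Partition (n:ℕ)) : ℝ)⁻¹ *
            ∑ lam : Nat.Partition (n:ℕ), (Ysn s lam : ℝ)))
        = ∑' n : ℕ+, F (n:ℕ) := tsum_congr hLHS
      _ = F 0 + ∑' n : ℕ+, F (n:ℕ) := by rw [hF0, zero_add]
      _ = ∑' n : ℕ, F n := (PgfAux.tsum_pnat_eq F hhs.summable).symm
      _ = ∑ j ∈ Finset.Icc 1 m, x^j * G := hhs.tsum_eq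
      _ = G * (1 - x^(m+1))/(1-x) - G := hval
      _ = (∏' k : ℕ+, (1 - x ^ (k:ℕ))⁻¹) * (1 - x ^ (m+1)) / (1 - x)
            - ∏' k : ℕ+, (1 - x ^ (k:ℕ))⁻¹ := by rw [hGprod_eq]
end

section
/- Fristedt's conditioning identity: Let 0 < q < 1 be fixed and let (γ_j)_{j≥1} be independent random variables with P(γ_j = k) = (1 − q^j) q^{jk} for k = 0, 1, 2, …. Then for any nonnegative integers m_1, …, m_n with ∑_{j=1}^n j·m_j = n, the probability that a uniformly random partition λ of n has multiplicities α_j^{(n)}(λ) = m_j for j = 1, …, n equals the conditional probability P(γ_j = m_j for j = 1,…,n, and γ_j = 0 for j > n | ∑_{j≥1} j·γ_j = n). -/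
open MeasureTheory ProbabilityTheory Finset Filter
open scoped ENNReal ProbabilityTheory


lemma weier (k : ℕ) (f : ℕ → ℝ) (h0 : ∀ i, 0 ≤ f i) (h1 : ∀ i, f i ≤ 1) :
    1 - ∑ i ∈ range k, f i ≤ ∏ i ∈ range k, (1 - f i) := by
  induction k with
  | zero => simp
  | succ k ih =>
    rw [Finset.sum_range_succ, Finset.prod_range_succ]
    have hprod : (0:ℝ) ≤ ∏ i ∈ range k, (1 - f i) :=
      Finset.prod_nonneg fun i _ => by linarith [h1 i]
    nlinarith [h0 k, h1 k, Finset.sum_nonneg (fun i (_ : i ∈ range k) => h0 i)]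

lemma prod_lb (q : ℝ) (hq0 : 0 < q) (hq1 : q < 1) :
    ∃ ε > 0, ∀ N, ε ≤ ∏ i ∈ range N, (1 - q ^ (i+1)) := by
  obtain ⟨J, hJ⟩ := exists_pow_lt_of_lt_one (by linarith : (0:ℝ) < (1 - q)/2) hq1
  set c := ∏ i ∈ range J, (1 - q ^ (i+1)) with hc
  have hfac : ∀ i : ℕ, 0 < 1 - q ^ (i+1) := fun i => by
    have : q ^ (i+1) < 1 := pow_lt_one₀ hq0.le hq1 (by omega)
    linarith
  have hcpos : 0 < c := Finset.prod_pos fun i _ => hfac i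
  refine ⟨c/2, by positivity, fun N => ?_⟩
  rcases le_or_gt N J with hNJ | hNJ
  · have : c ≤ ∏ i ∈ range N, (1 - q ^ (i+1)) := by
      rw [hc, ← Nat.add_sub_cancel' hNJ, Finset.prod_range_add]
      have h2 : ∏ i ∈ range (J - N), (1 - q ^ (N + i + 1)) ≤ 1 :=
        Finset.prod_le_one (fun i _ => (hfac _).le)
          (fun i _ => by have := pow_pos hq0 (N + i + 1); linarith)
      nlinarith [Finset.prod_pos (fun i (_ : i ∈ range N) => hfac i)]
    linarith
  · rw [← Nat.add_sub_cancel' hNJ.le, Finset.prod_range_add]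
    have htail : (1:ℝ)/2 ≤ ∏ i ∈ range (N - J), (1 - q ^ (J + i + 1)) := by
      have hw := weier (N - J) (fun i => q ^ (J + i + 1)) (fun i => by positivity)
        (fun i => (pow_lt_one₀ hq0.le hq1 (by omega)).le)
      have hgeom : ∑ i ∈ range (N - J), q ^ i ≤ 1 / (1-q) := by
        have h1 : ∑ i ∈ range (N-J), q ^ i = (1 - q ^ (N-J)) / (1-q) := by
          rw [geom_sum_eq (by linarith : q ≠ 1)]
          rw [div_eq_div_iff (by linarith) (by linarith)]
          ring
        rw [h1, div_le_div_iff₀ (by linarith) (by linarith)]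
        nlinarith [pow_nonneg hq0.le (N-J)]
      have hsum : ∑ i ∈ range (N - J), q ^ (J + i + 1) ≤ q ^ J / (1 - q) := by
        calc ∑ i ∈ range (N - J), q ^ (J + i + 1)
            = q ^ J * q * ∑ i ∈ range (N - J), q ^ i := by
              rw [Finset.mul_sum]; exact Finset.sum_congr rfl fun i _ => by ring
          _ ≤ q ^ J * q * (1 / (1-q)) :=
              mul_le_mul_of_nonneg_left hgeom (by positivity)
          _ ≤ q ^ J * 1 * (1 / (1-q)) := by
              have h1q : (0:ℝ) < 1-q := by linarith
              nlinarith [mul_le_mul_of_nonneg_left hq1.le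
                (mul_nonneg (pow_nonneg hq0.le J) (one_div_nonneg.2 h1q.le))]
          _ = q ^ J / (1 - q) := by ring
      have hqJ : q ^ J / (1 - q) ≤ 1/2 := by
        rw [div_le_iff₀ (by linarith)]
        nlinarith
      linarith
    nlinarith [mul_le_mul_of_nonneg_left htail hcpos.le]

lemma part_count_zero {n : ℕ} (lam : Nat.Partition n) {j : ℕ} (hj : j = 0 ∨ n < j) :
    lam.parts.count j = 0 := by
  rw [Multiset.count_eq_zero]
  intro hmem
  rcases hj with h | h
  · exact absurd (lam.parts_pos hmem) (by omega)
  · have := Multiset.single_le_sum (fun x _ => Nat.zero_le x) j hmem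
    rw [lam.parts_sum] at this; omega

lemma count_repsum (f : ℕ → ℕ) (n j : ℕ) :
    (∑ i ∈ range n, Multiset.replicate (f (i+1)) (i+1)).count j
      = if 1 ≤ j ∧ j ≤ n then f j else 0 := by
  rw [Multiset.count_sum']
  by_cases hj : 1 ≤ j ∧ j ≤ n
  · rw [if_pos hj]
    rw [Finset.sum_eq_single (j-1)]
    · rw [Multiset.count_replicate, if_pos (by omega)]
      congr 1; omega
    · intro i _ hne
      rw [Multiset.count_replicate, if_neg (by omega)]
    · intro h; exact absurd (Finset.mem_range.2 (by omega)) h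
  · rw [if_neg hj]
    apply Finset.sum_eq_zero
    intro i hi
    rw [Multiset.count_replicate, if_neg (by simp at hi ⊢; omega)]

lemma parts_eq {n : ℕ} (lam : Nat.Partition n) :
    lam.parts = ∑ i ∈ range n, Multiset.replicate (lam.parts.count (i+1)) (i+1) := by
  ext j
  rw [count_repsum (fun x => Multiset.count x lam.parts) n j]
  by_cases hj : 1 ≤ j ∧ j ≤ n
  · rw [if_pos hj]
  · rw [if_neg hj, part_count_zero lam (by omega)]

lemma repsum_sum (f : ℕ → ℕ) (n : ℕ) :
    (∑ i ∈ range n, Multiset.replicate (f (i+1)) (i+1)).sum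
      = ∑ i ∈ range n, (i+1) * f (i+1) := by
  rw [Multiset.sum_sum]
  apply Finset.sum_congr rfl
  intro i _
  rw [Multiset.sum_replicate, smul_eq_mul, Nat.mul_comm]

lemma part_count_sum {n : ℕ} (lam : Nat.Partition n) :
    ∑ i ∈ range n, (i+1) * lam.parts.count (i+1) = n := by
  have h := congrArg Multiset.sum (parts_eq lam)
  rw [lam.parts_sum, repsum_sum (fun x => Multiset.count x lam.parts) n] at h
  exact h.symm

def partOf (n : ℕ) (f : ℕ → ℕ) (hf : ∑ i ∈ range n, (i+1) * f (i+1) = n) : Nat.Partition n where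
  parts := ∑ i ∈ range n, Multiset.replicate (f (i+1)) (i+1)
  parts_pos := by
    intro j hj
    rw [Multiset.mem_sum] at hj
    obtain ⟨i, _, hi⟩ := hj
    rw [Multiset.eq_of_mem_replicate hi]
    omega
  parts_sum := by rw [repsum_sum f n]; exact hf

lemma partOf_count (n : ℕ) (f : ℕ → ℕ) (hf : ∑ i ∈ range n, (i+1) * f (i+1) = n) (j : ℕ) :
    (partOf n f hf).parts.count j = if 1 ≤ j ∧ j ≤ n then f j else 0 :=
  count_repsum f n j

lemma part_ext {n : ℕ} (lam lam' : Nat.Partition n)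
    (h : ∀ j, 1 ≤ j → j ≤ n → lam.parts.count j = lam'.parts.count j) : lam = lam' := by
  cases lam with | mk p pp ps => cases lam' with | mk p' pp' ps' =>
  simp only [Nat.Partition.mk.injEq]
  have h1 := parts_eq ⟨p, pp, ps⟩
  have h2 := parts_eq ⟨p', pp', ps'⟩
  simp only at h1 h2
  rw [h1, h2]
  apply Finset.sum_congr rfl
  intro i hi
  rw [h (i+1) (by omega) (by simpa using Finset.mem_range.1 hi)]


noncomputable def FF (N : ℕ) : Finset ℕ+ :=
  (Finset.range N).map ⟨Nat.succPNat, Nat.succPNat_injective⟩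

lemma mem_FF {N : ℕ} {j : ℕ+} : j ∈ FF N ↔ (j : ℕ) ≤ N := by
  simp only [FF, Finset.mem_map, Finset.mem_range, Function.Embedding.coeFn_mk]
  constructor
  · rintro ⟨i, hi, rfl⟩; simp only [Nat.succPNat_coe]; omega
  · intro h
    exact ⟨(j:ℕ) - 1, by have h2 : 0 < (j:ℕ) := j.2; omega, PNat.coe_injective (by
      have h2 : 0 < (j:ℕ) := j.2; simp only [Nat.succPNat_coe]; omega)⟩

lemma FF_mono : Monotone FF := fun _ _ h =>
  Finset.map_subset_map.2 (Finset.range_subset_range.2 h)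

lemma sum_FF (g : ℕ+ → ℕ) (N : ℕ) :
    ∑ j ∈ FF N, g j = ∑ i ∈ range N, g i.succPNat := by
  rw [FF, Finset.sum_map]; rfl

section
variable {q : ℝ} (hq0 : 0 < q) (hq1 : q < 1)
    {Ω : Type*} [MeasurableSpace Ω] {μ : Measure Ω} [IsProbabilityMeasure μ]
    {γ : ℕ+ → Ω → ℕ} (hmeas : ∀ j, Measurable (γ j))
    (hindep : iIndepFun γ μ)
    (hdist : ∀ (j : ℕ+) (k : ℕ),
      μ {ω | γ j ω = k} = ENNReal.ofReal ((1 - q ^ (j : ℕ)) * q ^ ((j : ℕ) * k)))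

omit [IsProbabilityMeasure μ] in
include hq0 hq1 hindep hdist in
lemma cyl (c : ℕ+ → ℕ) (N : ℕ) :
    μ (⋂ j ∈ FF N, γ j ⁻¹' {c j})
      = ENNReal.ofReal ((∏ i ∈ range N, (1 - q ^ (i+1))) * q ^ (∑ j ∈ FF N, (j:ℕ) * c j)) := by
  rw [hindep.measure_inter_preimage_eq_mul (FF N) (sets := fun j => {c j})
    (fun i _ => measurableSet_singleton _)]
  have h2 : ∀ j ∈ FF N, μ (γ j ⁻¹' {c j})
      = ENNReal.ofReal ((1 - q ^ (j:ℕ)) * q ^ ((j:ℕ) * c j)) := fun j _ => hdist j (c j)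
  rw [Finset.prod_congr rfl h2,
    ← ENNReal.ofReal_prod_of_nonneg (fun j _ => by
      have h3 : q ^ (j:ℕ) < 1 := pow_lt_one₀ hq0.le hq1 (by exact_mod_cast j.2.ne')
      have := pow_nonneg hq0.le ((j:ℕ) * c j)
      nlinarith)]
  congr 1
  rw [Finset.prod_mul_distrib, Finset.prod_pow_eq_pow_sum]
  congr 1
  · rw [FF, Finset.prod_map]
    exact Finset.prod_congr rfl fun i _ => by simp [Nat.succPNat_coe]

include hq0 hq1 hmeas hindep hdist in
lemma Elim (n : ℕ) (c : ℕ+ → ℕ) (hc0 : ∀ j : ℕ+, n < (j:ℕ) → c j = 0)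
    (hcs : ∑ j ∈ FF n, (j:ℕ) * c j = n) :
    Tendsto (fun N => ENNReal.ofReal ((∏ i ∈ range N, (1 - q ^ (i+1))) * q ^ n)) atTop
      (nhds (μ (⋂ j : ℕ+, γ j ⁻¹' {c j}))) := by
  set s : ℕ → Set Ω := fun N => ⋂ j ∈ FF N, γ j ⁻¹' {c j} with hs
  have hmeasS : ∀ N, MeasurableSet (s N) := fun N =>
    MeasurableSet.biInter (FF N).countable_toSet
      (fun j _ => hmeas j (measurableSet_singleton _))
  have hanti : Antitone s := by
    intro N M h ω hω
    rw [hs, Set.mem_iInter₂] at hω ⊢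
    exact fun j hj => hω j (FF_mono h hj)
  have hint : ⋂ N, s N = ⋂ j : ℕ+, γ j ⁻¹' {c j} := by
    ext ω
    simp only [hs, Set.mem_iInter]
    constructor
    · intro h j
      exact h (j:ℕ) j (mem_FF.2 le_rfl)
    · intro h N j _
      exact h j
  have htend := tendsto_measure_iInter_atTop (μ := μ)
    (fun N => (hmeasS N).nullMeasurableSet) hanti ⟨0, measure_ne_top μ _⟩
  rw [hint] at htend
  apply htend.congr'
  rw [Filter.eventuallyEq_iff_exists_mem]
  refine ⟨Set.Ici n, Filter.Ici_mem_atTop n, fun N hN => ?_⟩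
  have hsum : ∑ j ∈ FF N, (j:ℕ) * c j = n := by
    rw [← Finset.sum_subset (FF_mono hN)]
    · exact hcs
    · intro j _ hj
      rw [hc0 j (by rw [mem_FF] at hj; omega), Nat.mul_zero]
  rw [Function.comp_apply, hs, cyl hq0 hq1 hindep hdist c N, hsum]
end

/-- Fristedt's conditioning identity: the multiplicities of a uniformly random partition
of `n` are distributed as independent geometric variables `γ_j`
(with `P(γ_j = k) = (1 − qʲ)q^{jk}`) conditioned on `∑_{j≥1} j γ_j = n`. -/
theorem fristedt_conditioning
    (q : ℝ) (hq0 : 0 < q) (hq1 : q < 1)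
    {Ω : Type*} [MeasurableSpace Ω] (μ : Measure Ω) [IsProbabilityMeasure μ]
    (γ : ℕ+ → Ω → ℕ) (hmeas : ∀ j, Measurable (γ j))
    (hindep : iIndepFun γ μ)
    (hdist : ∀ (j : ℕ+) (k : ℕ),
      μ {ω | γ j ω = k} = ENNReal.ofReal ((1 - q ^ (j : ℕ)) * q ^ ((j : ℕ) * k)))
    (n : ℕ) (hn : 0 < n) (m : ℕ → ℕ) (hm : ∑ j ∈ Finset.Icc 1 n, j * m j = n) :
    (Nat.card {lam : Nat.Partition n // ∀ j ∈ Finset.Icc 1 n, lam.parts.count j = m j} : ℝ≥0∞)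
        / (Fintype.card (Nat.Partition n) : ℝ≥0∞)
      = μ[{ω | (∀ j : ℕ+, (j : ℕ) ≤ n → γ j ω = m (j : ℕ)) ∧
              ∀ j : ℕ+, n < (j : ℕ) → γ j ω = 0}
          | {ω | ∑' j : ℕ+, ((j : ℕ) : ℝ≥0∞) * (γ j ω : ℝ≥0∞) = (n : ℝ≥0∞)}] := by
  classical
  have hm' : ∑ i ∈ range n, (i+1) * m (i+1) = n := by
    have h := hm
    rw [show Finset.Icc 1 n = Finset.Ico 1 (n+1) from by rw [Finset.Ico_add_one_right_eq_Icc],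
      Finset.sum_Ico_eq_sum_range] at h
    simp only [Nat.add_sub_cancel] at h
    conv_rhs => rw [← h]
    exact Finset.sum_congr rfl fun i _ => by rw [Nat.add_comm 1 i]
  set lam₀ : Nat.Partition n := partOf n m hm' with hlam₀
  set cOf : Nat.Partition n → ℕ+ → ℕ := fun lam j => lam.parts.count (j:ℕ) with hcOf
  have hgood0 : ∀ lam : Nat.Partition n, ∀ j : ℕ+, n < (j:ℕ) → cOf lam j = 0 :=
    fun lam j hj => part_count_zero lam (Or.inr hj)
  have hgoods : ∀ lam : Nat.Partition n, ∑ j ∈ FF n, (j:ℕ) * cOf lam j = n := by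
    intro lam
    rw [sum_FF (fun j => (j:ℕ) * cOf lam j) n]
    simp only [hcOf, Nat.succPNat_coe]
    exact part_count_sum lam
  set E : (ℕ+ → ℕ) → Set Ω := fun c => ⋂ j : ℕ+, γ j ⁻¹' {c j} with hE
  have hEmeas : ∀ c, MeasurableSet (E c) := fun c =>
    MeasurableSet.iInter fun j => hmeas j (measurableSet_singleton _)
  have hmemE : ∀ c (ω : Ω), ω ∈ E c ↔ ∀ j : ℕ+, γ j ω = c j := fun c ω => by
    simp [hE, Set.mem_iInter, Set.mem_preimage]
  set K := μ (E (cOf lam₀)) with hKdef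
  have hEK : ∀ lam : Nat.Partition n, μ (E (cOf lam)) = K :=
    fun lam => tendsto_nhds_unique
      (Elim hq0 hq1 hmeas hindep hdist n (cOf lam) (hgood0 lam) (hgoods lam))
      (Elim hq0 hq1 hmeas hindep hdist n (cOf lam₀) (hgood0 lam₀) (hgoods lam₀))
  have hK0 : K ≠ 0 := by
    obtain ⟨ε, hε, hεle⟩ := prod_lb q hq0 hq1
    have hlow : ENNReal.ofReal (ε * q ^ n) ≤ K := by
      apply ge_of_tendsto
        (Elim hq0 hq1 hmeas hindep hdist n (cOf lam₀) (hgood0 lam₀) (hgoods lam₀))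
      apply Filter.Eventually.of_forall
      intro N
      exact ENNReal.ofReal_le_ofReal
        (mul_le_mul_of_nonneg_right (hεle N) (pow_nonneg hq0.le n))
    intro h
    rw [h, le_zero_iff, ENNReal.ofReal_eq_zero] at hlow
    nlinarith [pow_pos hq0 n]
  have hKtop : K ≠ ∞ := measure_ne_top μ _
  set S := {ω : Ω | ∑' j : ℕ+, ((j : ℕ) : ℝ≥0∞) * (γ j ω : ℝ≥0∞) = (n : ℝ≥0∞)} with hSdef
  have hSmeas : MeasurableSet S := by
    have hg : Measurable fun ω : Ω => ∑' j : ℕ+, ((j:ℕ) : ℝ≥0∞) * (γ j ω : ℝ≥0∞) :=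
      Measurable.ennreal_tsum fun j =>
        (measurable_from_top.comp (hmeas j)).const_mul _
    exact hg (measurableSet_singleton _)
  have htsumE : ∀ (c : ℕ+ → ℕ) (ω : Ω), (∀ j : ℕ+, n < (j:ℕ) → c j = 0) →
      (∀ j : ℕ+, γ j ω = c j) →
      ∑' j : ℕ+, ((j:ℕ) : ℝ≥0∞) * (γ j ω : ℝ≥0∞)
        = ((∑ j ∈ FF n, (j:ℕ) * c j : ℕ) : ℝ≥0∞) := by
    intro c ω h0 hω
    rw [tsum_eq_sum (s := FF n) ?_]
    · push_cast
      exact Finset.sum_congr rfl fun j _ => by rw [hω j]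
    · intro j hj
      rw [hω j, h0 j (by rw [mem_FF] at hj; omega)]
      simp
  -- decomposition of S
  have hSdecomp : S = ⋃ lam : Nat.Partition n, E (cOf lam) := by
    ext ω
    simp only [Set.mem_iUnion]
    constructor
    · intro hω
      have hz : ∀ j : ℕ+, n < (j:ℕ) → γ j ω = 0 := by
        intro j hj
        by_contra hne
        have h1 : 1 ≤ γ j ω := Nat.one_le_iff_ne_zero.2 hne
        have hle : ((j:ℕ) : ℝ≥0∞) * (γ j ω : ℝ≥0∞) ≤ (n : ℝ≥0∞) := by
          rw [hSdef] at hω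
          exact hω ▸ ENNReal.le_tsum j
        have : ((j:ℕ) : ℝ≥0∞) ≤ (n : ℝ≥0∞) := by
          refine le_trans ?_ hle
          exact le_mul_of_one_le_right zero_le (by exact_mod_cast h1)
        rw [Nat.cast_le] at this
        omega
      have hna : ∑ j ∈ FF n, (j:ℕ) * γ j ω = n := by
        have := htsumE (fun j => γ j ω) ω hz (fun _ => rfl)
        rw [hSdef, Set.mem_setOf_eq, this, Nat.cast_inj] at hω
        exact hω
      set f : ℕ → ℕ := fun i => if h : 0 < i then γ ⟨i, h⟩ ω else 0 with hf
      have hfv : ∀ j : ℕ+, f (j:ℕ) = γ j ω := by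
        intro j
        rw [hf]
        exact dif_pos j.2
      have hfs : ∑ i ∈ range n, (i+1) * f (i+1) = n := by
        have heq : ∑ i ∈ range n, (i+1) * f (i+1) = ∑ j ∈ FF n, (j:ℕ) * γ j ω := by
          rw [sum_FF (fun j => (j:ℕ) * γ j ω) n]
          exact Finset.sum_congr rfl fun i _ => by
            rw [show f (i+1) = γ i.succPNat ω from hfv i.succPNat, Nat.succPNat_coe]
        rw [heq, hna]
      refine ⟨partOf n f hfs, (hmemE _ ω).2 fun j => ?_⟩
      rw [hcOf]
      simp only
      rw [partOf_count n f hfs (j:ℕ)]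
      by_cases hj : (j:ℕ) ≤ n
      · rw [if_pos ⟨j.2, hj⟩, hfv]
      · rw [if_neg (by omega), hz j (by omega)]
    · rintro ⟨lam, hω⟩
      have hωE := (hmemE _ ω).1 hω
      rw [hSdef, Set.mem_setOf_eq,
        htsumE (cOf lam) ω (hgood0 lam) hωE, hgoods lam]
  have hSm : μ S = (Fintype.card (Nat.Partition n) : ℝ≥0∞) * K := by
    rw [hSdecomp, measure_iUnion ?_ (fun lam => hEmeas _)]
    · rw [tsum_fintype]
      rw [Finset.sum_congr rfl (fun lam _ => hEK lam), Finset.sum_const,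
        Finset.card_univ, nsmul_eq_mul]
    · intro lam lam' hne
      rw [Function.onFun, Set.disjoint_left]
      intro ω hω hω'
      have h1 := (hmemE _ ω).1 hω
      have h2 := (hmemE _ ω).1 hω'
      apply hne
      apply part_ext
      intro j h1j hjn
      have : (⟨j, h1j⟩ : ℕ+) = (⟨j, h1j⟩ : ℕ+) := rfl
      have := (h1 ⟨j, h1j⟩).symm.trans (h2 ⟨j, h1j⟩)
      simpa [hcOf] using this
  -- the event A
  have hA : {ω : Ω | (∀ j : ℕ+, (j : ℕ) ≤ n → γ j ω = m (j : ℕ)) ∧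
      ∀ j : ℕ+, n < (j : ℕ) → γ j ω = 0} = E (cOf lam₀) := by
    ext ω
    rw [Set.mem_setOf_eq, hmemE]
    constructor
    · rintro ⟨hle, hgt⟩ j
      rw [hcOf]
      simp only
      rw [hlam₀, partOf_count n m hm' (j:ℕ)]
      by_cases hj : (j:ℕ) ≤ n
      · rw [if_pos ⟨j.2, hj⟩]; exact hle j hj
      · rw [if_neg (by omega)]; exact hgt j (by omega)
    · intro h
      constructor
      · intro j hj
        have := h j
        rw [hcOf] at this
        simp only at this
        rw [hlam₀, partOf_count n m hm' (j:ℕ), if_pos ⟨j.2, hj⟩] at this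
        exact this
      · intro j hj
        have := h j
        rw [this]
        exact hgood0 lam₀ j hj
  have hAS : E (cOf lam₀) ⊆ S := by
    rw [hSdecomp]
    exact Set.subset_iUnion (fun lam => E (cOf lam)) lam₀
  -- count the subtype
  have hcard : Nat.card {lam : Nat.Partition n //
      ∀ j ∈ Finset.Icc 1 n, lam.parts.count j = m j} = 1 := by
    rw [Nat.card_eq_one_iff_unique]
    constructor
    · constructor
      intro ⟨a, ha⟩ ⟨b, hb⟩
      apply Subtype.ext
      apply part_ext
      intro j h1j hjn
      rw [ha j (Finset.mem_Icc.2 ⟨h1j, hjn⟩), hb j (Finset.mem_Icc.2 ⟨h1j, hjn⟩)]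
    · refine ⟨⟨lam₀, fun j hj => ?_⟩⟩
      rw [Finset.mem_Icc] at hj
      rw [hlam₀, partOf_count n m hm' j, if_pos hj]
  -- assemble
  rw [hcard, hA, cond_apply hSmeas, Set.inter_eq_self_of_subset_right hAS,
    hEK lam₀, hSm]
  have hcne : (Fintype.card (Nat.Partition n) : ℝ≥0∞) ≠ 0 := by
    have : Nonempty (Nat.Partition n) := ⟨lam₀⟩
    simp only [ne_eq, Nat.cast_eq_zero]
    exact Fintype.card_ne_zero
  rw [ENNReal.mul_inv (Or.inl hcne) (Or.inl (ENNReal.natCast_ne_top _)),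
    mul_assoc, ENNReal.inv_mul_cancel hK0 hKtop, mul_one, Nat.cast_one, one_div]
end

section
/- Let (γ_j)_{j≥1} be independent geometric random variables with P(γ_j = k) = (1 − q^j) q^{jk}, k ≥ 0, where 0 < q < 1. Then P(∑_{j≥1} j γ_j = n) = p(n) q^n ∏_{k≥1} (1 − q^k). -/
open MeasureTheory ProbabilityTheory
open scoped ENNReal
open Filter Topology

lemma pws_summable_pow {q : ℝ} (hq0 : 0 < q) (hq1 : q < 1) :
    Summable (fun k : ℕ+ => q ^ (k : ℕ)) :=
  (summable_geometric_of_lt_one hq0.le hq1).comp_injective PNat.coe_injective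

lemma pws_pow_lt_one {q : ℝ} (hq0 : 0 < q) (hq1 : q < 1) (k : ℕ+) : q ^ (k : ℕ) < 1 :=
  pow_lt_one₀ hq0.le hq1 k.pos.ne'

lemma pws_multipliable {q : ℝ} (hq0 : 0 < q) (hq1 : q < 1) :
    Multipliable (fun k : ℕ+ => 1 - q ^ (k : ℕ)) := by
  have hpos : ∀ k : ℕ+, 0 < 1 - q ^ (k : ℕ) := fun k => by
    have := pws_pow_lt_one hq0 hq1 k; linarith
  have hsum : Summable (fun k : ℕ+ => Real.log (1 - q ^ (k : ℕ))) := by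
    rw [← summable_neg_iff]
    refine Summable.of_nonneg_of_le (f := fun k : ℕ+ => (1 - q)⁻¹ * q ^ (k : ℕ)) ?_ ?_
      ((pws_summable_pow hq0 hq1).mul_left _)
    · intro k
      have : Real.log (1 - q ^ (k : ℕ)) ≤ 0 :=
        Real.log_nonpos (hpos k).le (by have := pow_pos hq0 (k:ℕ); linarith)
      linarith
    · intro k
      have h1 : 0 < 1 - q ^ (k : ℕ) := hpos k
      have h2 : -Real.log (1 - q ^ (k : ℕ)) = Real.log (1 - q ^ (k : ℕ))⁻¹ :=
        (Real.log_inv _).symm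
      rw [h2]
      have h3 : Real.log (1 - q ^ (k : ℕ))⁻¹ ≤ (1 - q ^ (k : ℕ))⁻¹ - 1 :=
        Real.log_le_sub_one_of_pos (by positivity)
      have h4 : (1 - q ^ (k : ℕ))⁻¹ - 1 = q ^ (k : ℕ) / (1 - q ^ (k : ℕ)) := by
        field_simp
        ring
      have h5 : q ^ (k : ℕ) ≤ q := by
        calc q ^ (k : ℕ) ≤ q ^ 1 := pow_le_pow_of_le_one hq0.le hq1.le k.one_le
        _ = q := pow_one q
      have h6 : q ^ (k : ℕ) / (1 - q ^ (k : ℕ)) ≤ q ^ (k : ℕ) / (1 - q) := by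
        apply div_le_div_of_nonneg_left (by positivity) (by linarith) (by linarith)
      rw [h4] at h3
      calc Real.log (1 - q ^ (k : ℕ))⁻¹ ≤ q ^ (k : ℕ) / (1 - q ^ (k : ℕ)) := h3
        _ ≤ q ^ (k : ℕ) / (1 - q) := h6
        _ = (1 - q)⁻¹ * q ^ (k : ℕ) := by ring
  exact Real.multipliable_of_summable_log hpos hsum

lemma pws_tendsto_prod {q : ℝ} (hq0 : 0 < q) (hq1 : q < 1) :
    Tendsto (fun N : ℕ => ∏ j ∈ Finset.Icc (1 : ℕ+) N.succPNat, (1 - q ^ (j : ℕ)))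
      atTop (𝓝 (∏' k : ℕ+, (1 - q ^ (k : ℕ)))) := by
  have h := (pws_multipliable hq0 hq1).hasProd
  refine h.comp (tendsto_atTop_finset_of_monotone ?_ ?_)
  · intro a b hab
    exact Finset.Icc_subset_Icc le_rfl (Nat.succPNat_mono (by omega))
  · intro j
    refine ⟨(j : ℕ), Finset.mem_Icc.2 ⟨j.one_le, ?_⟩⟩
    rw [← PNat.coe_le_coe]
    simp [Nat.succPNat]

lemma pws_tsum_eq (f : ℕ+ → ℕ) (s : Finset ℕ+) (h : ∀ j ∉ s, f j = 0) :
    ∑' j : ℕ+, ((j : ℕ) : ℝ≥0∞) * (f j : ℝ≥0∞) = ((∑ j ∈ s, (j : ℕ) * f j : ℕ) : ℝ≥0∞) := by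
  rw [tsum_eq_sum (s := s) (fun j hj => by simp [h j hj])]
  push_cast
  rfl

lemma pws_count_msum (s : Finset ℕ+) (g : ℕ+ → ℕ) (hg : ∀ j ∉ s, g j = 0) (k : ℕ+) :
    Multiset.count (k : ℕ) (∑ j ∈ s, Multiset.replicate (g j) (j : ℕ)) = g k := by
  classical
  rw [Multiset.count_sum']
  have h : ∀ j ∈ s, Multiset.count (k : ℕ) (Multiset.replicate (g j) (j : ℕ))
      = if j = k then g j else 0 := by
    intro j _
    simp only [Multiset.count_replicate, PNat.coe_inj]
  rw [Finset.sum_congr rfl h, Finset.sum_ite_eq' s k g]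
  by_cases hk : k ∈ s
  · simp [hk]
  · simp [hk, hg k hk]

lemma pws_count_zero (s : Finset ℕ+) (g : ℕ+ → ℕ) :
    Multiset.count 0 (∑ j ∈ s, Multiset.replicate (g j) (j : ℕ)) = 0 := by
  rw [Multiset.count_sum']
  refine Finset.sum_eq_zero fun j _ => ?_
  rw [Multiset.count_replicate, if_neg]
  exact fun h => j.pos.ne' h

lemma pws_sum_msum (s : Finset ℕ+) (g : ℕ+ → ℕ) :
    (∑ j ∈ s, Multiset.replicate (g j) (j : ℕ)).sum = ∑ j ∈ s, (j : ℕ) * g j := by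
  have h := map_sum Multiset.sumAddMonoidHom
    (fun j : ℕ+ => Multiset.replicate (g j) (j : ℕ)) s
  simp only [Multiset.sumAddMonoidHom, AddMonoidHom.coe_mk, ZeroHom.coe_mk] at h
  rw [h]
  refine Finset.sum_congr rfl fun j _ => ?_
  rw [Multiset.sum_replicate, smul_eq_mul, mul_comm]

lemma pws_mem_msum {s : Finset ℕ+} {g : ℕ+ → ℕ} {m : ℕ}
    (h : m ∈ ∑ j ∈ s, Multiset.replicate (g j) (j : ℕ)) : ∃ j ∈ s, m = (j : ℕ) := by
  rw [Multiset.mem_sum] at h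
  obtain ⟨j, hj, hm⟩ := h
  exact ⟨j, hj, Multiset.eq_of_mem_replicate hm⟩

/-- For independent geometric variables `γ_j` with `P(γ_j = k) = (1 − qʲ)q^{jk}`,
`P(∑_{j≥1} j γ_j = n) = p(n) qⁿ ∏_{k≥1}(1 − q^k)`. -/
theorem prob_weighted_sum_eq
    (q : ℝ) (hq0 : 0 < q) (hq1 : q < 1)
    {Ω : Type*} [MeasurableSpace Ω] (μ : Measure Ω) [IsProbabilityMeasure μ]
    (γ : ℕ+ → Ω → ℕ) (hmeas : ∀ j, Measurable (γ j))
    (hindep : iIndepFun γ μ)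
    (hdist : ∀ (j : ℕ+) (k : ℕ),
      μ {ω | γ j ω = k} = ENNReal.ofReal ((1 - q ^ (j : ℕ)) * q ^ ((j : ℕ) * k)))
    (n : ℕ) :
    μ {ω | ∑' j : ℕ+, ((j : ℕ) : ℝ≥0∞) * (γ j ω : ℝ≥0∞) = (n : ℝ≥0∞)}
      = ENNReal.ofReal ((Fintype.card (Nat.Partition n) : ℝ) * q ^ n *
          ∏' k : ℕ+, (1 - q ^ (k : ℕ))) := by
  classical
  set s : Finset ℕ+ := Finset.Icc 1 n.succPNat with hs_def
  have hmem_s : ∀ j : ℕ+, j ∈ s ↔ (j : ℕ) ≤ n + 1 := by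
    intro j
    rw [hs_def, Finset.mem_Icc]
    constructor
    · rintro ⟨-, h⟩
      have := (PNat.coe_le_coe j n.succPNat).2 h
      simpa using this
    · intro h
      refine ⟨j.one_le, ?_⟩
      rw [← PNat.coe_le_coe]
      simpa using h
  -- support of partition counts
  have hF_supp : ∀ (p : Nat.Partition n) (j : ℕ+), n < (j : ℕ) →
      p.parts.count (j : ℕ) = 0 := by
    intro p j hj
    rw [Multiset.count_eq_zero]
    intro hmem
    have h1 := Multiset.single_le_sum (fun x _ => Nat.zero_le x) _ hmem
    rw [p.parts_sum] at h1
    omega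
  have hF_supp' : ∀ (p : Nat.Partition n) (j : ℕ+), j ∉ s → p.parts.count (j : ℕ) = 0 := by
    intro p j hj
    have h1 : ¬ (j : ℕ) ≤ n + 1 := fun h => hj ((hmem_s j).2 h)
    exact hF_supp p j (by omega)
  -- canonical form of a partition
  have hF_canon : ∀ p : Nat.Partition n,
      p.parts = ∑ j ∈ s, Multiset.replicate (p.parts.count (j : ℕ)) (j : ℕ) := by
    intro p
    ext m
    rcases Nat.eq_zero_or_pos m with rfl | hm
    · rw [pws_count_zero, Multiset.count_eq_zero]
      exact fun h => lt_irrefl 0 (p.parts_pos h)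
    · have hmj : m = ((⟨m, hm⟩ : ℕ+) : ℕ) := rfl
      rw [hmj]
      exact (pws_count_msum s (fun j => p.parts.count (j : ℕ)) (hF_supp' p) ⟨m, hm⟩).symm
  have hF_sum : ∀ p : Nat.Partition n,
      ∑ j ∈ s, (j : ℕ) * p.parts.count (j : ℕ) = n := by
    intro p
    have h := congrArg Multiset.sum (hF_canon p)
    rw [p.parts_sum, pws_sum_msum] at h
    exact h.symm
  have hF_inj : Function.Injective
      (fun p : Nat.Partition n => fun j : ℕ+ => p.parts.count (j : ℕ)) := by
    intro p p' h
    apply Nat.Partition.ext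
    rw [hF_canon p, hF_canon p']
    refine Finset.sum_congr rfl fun j _ => ?_
    have h' : Multiset.count (↑j) p.parts = Multiset.count (↑j) p'.parts := congrFun h j
    rw [h']
  -- atoms
  set A : Nat.Partition n → Set Ω :=
    fun p => ⋂ j : ℕ+, γ j ⁻¹' {p.parts.count (j : ℕ)} with hA_def
  have hmemA : ∀ (p : Nat.Partition n) (ω : Ω),
      ω ∈ A p ↔ ∀ j : ℕ+, γ j ω = p.parts.count (j : ℕ) := by
    intro p ω
    simp [hA_def, Set.mem_iInter]
  have hA_meas : ∀ p, MeasurableSet (A p) := fun p =>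
    MeasurableSet.iInter fun j => hmeas j (measurableSet_singleton _)
  -- event decomposition
  have hE : {ω | ∑' j : ℕ+, ((j : ℕ) : ℝ≥0∞) * (γ j ω : ℝ≥0∞) = (n : ℝ≥0∞)}
      = ⋃ p : Nat.Partition n, A p := by
    ext ω
    simp only [Set.mem_setOf_eq, Set.mem_iUnion]
    constructor
    · intro hω
      set g : ℕ+ → ℕ := fun j => γ j ω with hg
      have hg_supp : ∀ j : ℕ+, n < (j : ℕ) → g j = 0 := by
        intro j hj
        by_contra hne
        have h1 : ((j : ℕ) : ℝ≥0∞) * (g j : ℝ≥0∞) ≤ (n : ℝ≥0∞) := hω ▸ ENNReal.le_tsum j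
        have h2 : ((j : ℕ) : ℝ≥0∞) ≤ ((j : ℕ) : ℝ≥0∞) * (g j : ℝ≥0∞) := by
          nth_rewrite 1 [← mul_one ((j : ℕ) : ℝ≥0∞)]
          have : (1 : ℝ≥0∞) ≤ (g j : ℝ≥0∞) := by
            exact_mod_cast Nat.one_le_iff_ne_zero.2 hne
          exact mul_le_mul_right this _
        have h3 := le_trans h2 h1
        rw [Nat.cast_le] at h3
        omega
      have hg_supp' : ∀ j ∉ s, g j = 0 := by
        intro j hj
        have h1 : ¬ (j : ℕ) ≤ n + 1 := fun h => hj ((hmem_s j).2 h)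
        exact hg_supp j (by omega)
      have hsum : ∑ j ∈ s, (j : ℕ) * g j = n := by
        have h := pws_tsum_eq g s hg_supp'
        rw [hω] at h
        exact_mod_cast h.symm
      refine ⟨⟨∑ j ∈ s, Multiset.replicate (g j) (j : ℕ), ?_, ?_⟩, ?_⟩
      · intro i hi
        obtain ⟨j, _, rfl⟩ := pws_mem_msum hi
        exact j.pos
      · rw [pws_sum_msum]; exact hsum
      · rw [hmemA]
        intro j
        exact (pws_count_msum s g hg_supp' j).symm
    · rintro ⟨p, hp⟩
      rw [hmemA] at hp
      have h1 : ∑' j : ℕ+, ((j : ℕ) : ℝ≥0∞) * (γ j ω : ℝ≥0∞)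
          = ((∑ j ∈ s, (j : ℕ) * p.parts.count (j : ℕ) : ℕ) : ℝ≥0∞) := by
        rw [show (fun j : ℕ+ => ((j : ℕ) : ℝ≥0∞) * (γ j ω : ℝ≥0∞))
            = fun j : ℕ+ => ((j : ℕ) : ℝ≥0∞) * (p.parts.count (j : ℕ) : ℝ≥0∞) from
          funext fun j => by rw [hp j]]
        exact pws_tsum_eq _ s (hF_supp' p)
      rw [h1, hF_sum p]
  -- disjointness
  have hdisj : Pairwise (Function.onFun Disjoint A) := by
    intro p p' hne
    rw [Function.onFun, Set.disjoint_left]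
    intro ω h1 h2
    apply hne
    apply hF_inj
    funext j
    show Multiset.count (↑j) p.parts = Multiset.count (↑j) p'.parts
    rw [← (hmemA p ω).1 h1 j, ← (hmemA p' ω).1 h2 j]
  -- measure of each atom
  have hAtom : ∀ p : Nat.Partition n,
      μ (A p) = ENNReal.ofReal (q ^ n * ∏' k : ℕ+, (1 - q ^ (k : ℕ))) := by
    intro p
    set f : ℕ+ → ℕ := fun j => p.parts.count (j : ℕ) with hf_def
    set B : ℕ → Set Ω :=
      fun N => ⋂ j ∈ Finset.Icc (1 : ℕ+) N.succPNat, γ j ⁻¹' {f j} with hB_def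
    have hBmeas : ∀ N, MeasurableSet (B N) := fun N =>
      MeasurableSet.biInter (Finset.Icc (1 : ℕ+) N.succPNat).countable_toSet
        fun j _ => hmeas j (measurableSet_singleton _)
    have hBanti : Antitone B := by
      intro N M hNM ω hω
      rw [hB_def, Set.mem_iInter₂] at hω ⊢
      intro j hj
      exact hω j (Finset.Icc_subset_Icc le_rfl (Nat.succPNat_mono hNM) hj)
    have hBInter : ⋂ N, B N = A p := by
      ext ω
      simp only [Set.mem_iInter, hB_def, hmemA, Set.mem_iInter₂, Set.mem_preimage,
        Set.mem_singleton_iff]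
      constructor
      · intro h j
        refine h (j : ℕ) j (Finset.mem_Icc.2 ⟨j.one_le, ?_⟩)
        rw [← PNat.coe_le_coe]
        simp
      · intro h N j _
        exact h j
    have hBmeasure : ∀ N, μ (B N) = ∏ j ∈ Finset.Icc (1 : ℕ+) N.succPNat,
        ENNReal.ofReal ((1 - q ^ (j : ℕ)) * q ^ ((j : ℕ) * f j)) := by
      intro N
      rw [hB_def,
        hindep.meas_biInter (fun j _ => ⟨{f j}, measurableSet_singleton _, rfl⟩)]
      refine Finset.prod_congr rfl fun j _ => ?_
      have hpre : γ j ⁻¹' {f j} = {ω | γ j ω = f j} := rfl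
      rw [hpre, hdist j (f j)]
    have hprod : ∀ N, n ≤ N → μ (B N) = ENNReal.ofReal
        (q ^ n * ∏ j ∈ Finset.Icc (1 : ℕ+) N.succPNat, (1 - q ^ (j : ℕ))) := by
      intro N hN
      have hnonneg : ∀ j ∈ Finset.Icc (1 : ℕ+) N.succPNat,
          0 ≤ (1 - q ^ (j : ℕ)) * q ^ ((j : ℕ) * f j) := by
        intro j _
        have := pws_pow_lt_one hq0 hq1 j
        have h2 : (0:ℝ) ≤ q ^ ((j : ℕ) * f j) := pow_nonneg hq0.le _
        nlinarith
      rw [hBmeasure N, ← ENNReal.ofReal_prod_of_nonneg hnonneg]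
      congr 1
      rw [Finset.prod_mul_distrib, Finset.prod_pow_eq_pow_sum]
      have hsub : s ⊆ Finset.Icc (1 : ℕ+) N.succPNat :=
        Finset.Icc_subset_Icc le_rfl (Nat.succPNat_mono hN)
      have hsum2 : ∑ j ∈ Finset.Icc (1 : ℕ+) N.succPNat, (j : ℕ) * f j = n := by
        rw [← Finset.sum_subset hsub (fun x _ hx => by rw [hf_def]; simp [hF_supp' p x hx])]
        exact hF_sum p
      rw [hsum2]
      ring
    have h1 : Tendsto (fun N => μ (B N)) atTop (𝓝 (μ (A p))) := by
      rw [← hBInter]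
      exact tendsto_measure_iInter_atTop (fun N => (hBmeas N).nullMeasurableSet) hBanti
        ⟨0, measure_ne_top μ _⟩
    have h2 : Tendsto (fun N => μ (B N)) atTop
        (𝓝 (ENNReal.ofReal (q ^ n * ∏' k : ℕ+, (1 - q ^ (k : ℕ))))) := by
      have h3 := (pws_tendsto_prod hq0 hq1).const_mul (q ^ n)
      have h4 := (ENNReal.continuous_ofReal.tendsto _).comp h3
      apply h4.congr'
      filter_upwards [eventually_ge_atTop n] with N hN
      exact (hprod N hN).symm
    exact tendsto_nhds_unique h1 h2
  -- assemble
  rw [hE, measure_iUnion hdisj hA_meas]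
  rw [tsum_eq_sum (s := (Finset.univ : Finset (Nat.Partition n))) (by simp)]
  rw [Finset.sum_congr rfl (fun p _ => hAtom p), Finset.sum_const, Finset.card_univ,
    nsmul_eq_mul, ← ENNReal.ofReal_natCast (Fintype.card (Nat.Partition n)),
    ← ENNReal.ofReal_mul (by positivity)]
  congr 1
  ring
end

section
/- The integral ∫_0^t u² e^{-u}/(1 − e^{-u})² du converges for every t > 0 (the integrand extends continuously to u = 0 with value 1), and ∫_0^∞ u² e^{-u}/(1 − e^{-u})² du = π²/3. -/
open MeasureTheory

/-- Key inequality: `u * e^{-u} ≤ 1 - e^{-u}`. -/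
lemma aux_one_sub_exp (u : ℝ) : u * Real.exp (-u) ≤ 1 - Real.exp (-u) := by
  have h := Real.add_one_le_exp u
  have := mul_le_mul_of_nonneg_left h (Real.exp_pos (-u)).le
  rw [← Real.exp_add] at this
  simp at this
  nlinarith [Real.exp_pos (-u)]

/-- Integrability of `u^2 e^{-u}` on `Ioi 0`. -/
lemma aux_integrable_sq_exp : IntegrableOn (fun u : ℝ => u ^ 2 * Real.exp (-u)) (Set.Ioi 0) := by
  have h := Real.GammaIntegral_convergent (s := 3) (by norm_num)
  refine (h.congr_fun (fun x hx => ?_) measurableSet_Ioi)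
  beta_reduce
  rw [show (3:ℝ) - 1 = ((2:ℕ):ℝ) by norm_num, Real.rpow_natCast]
  ring

lemma aux_integrableOn_f : IntegrableOn
    (fun u : ℝ => u ^ 2 * Real.exp (-u) / (1 - Real.exp (-u)) ^ 2) (Set.Ioi 0) := by
  set f : ℝ → ℝ := fun u => u ^ 2 * Real.exp (-u) / (1 - Real.exp (-u)) ^ 2 with hf
  have hm : Measurable f := by rw [hf]; fun_prop
  have hbound : ∀ u : ℝ, 0 < u → f u ≤ Real.exp u := by
    intro u hu
    have h1 : u * Real.exp (-u) ≤ 1 - Real.exp (-u) := aux_one_sub_exp u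
    have h2 : (0:ℝ) < u * Real.exp (-u) := by positivity
    have h3 : (u * Real.exp (-u)) ^ 2 ≤ (1 - Real.exp (-u)) ^ 2 := by nlinarith
    have h4 : f u ≤ u ^ 2 * Real.exp (-u) / (u * Real.exp (-u)) ^ 2 := by
      apply div_le_div_of_nonneg_left (by positivity) (by positivity) h3
    calc f u ≤ u ^ 2 * Real.exp (-u) / (u * Real.exp (-u)) ^ 2 := h4
      _ = Real.exp u := by
          rw [mul_pow, Real.exp_neg]
          have h5 := Real.exp_pos u
          field_simp
  have h01 : IntegrableOn f (Set.Ioc 0 1) := by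
    apply Measure.integrableOn_of_bounded (M := Real.exp 1) measure_Ioc_lt_top.ne
      hm.aestronglyMeasurable
    filter_upwards [ae_restrict_mem measurableSet_Ioc] with u hu
    rw [Real.norm_eq_abs, abs_of_nonneg]
    · exact le_trans (hbound u hu.1) (Real.exp_le_exp.2 hu.2)
    · have h1 : u * Real.exp (-u) ≤ 1 - Real.exp (-u) := aux_one_sub_exp u
      have h2 : (0:ℝ) < 1 - Real.exp (-u) :=
        lt_of_lt_of_le (by have := hu.1; positivity) h1
      rw [hf]; positivity
  have h1i : IntegrableOn f (Set.Ioi 1) := by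
    have hC : (0:ℝ) < 1 - Real.exp (-1) := by
      have : Real.exp (-1:ℝ) < 1 := by rw [Real.exp_lt_one_iff]; norm_num
      linarith
    apply Integrable.mono'
      ((aux_integrable_sq_exp.mono_set (Set.Ioi_subset_Ioi zero_le_one)).const_mul
        (((1 - Real.exp (-1)) ^ 2)⁻¹)) hm.aestronglyMeasurable.restrict
    filter_upwards [ae_restrict_mem measurableSet_Ioi] with u hu
    have hu1 : (1:ℝ) ≤ u := le_of_lt hu
    have hmono : 1 - Real.exp (-1) ≤ 1 - Real.exp (-u) := by
      have : Real.exp (-u) ≤ Real.exp (-1) := Real.exp_le_exp.2 (by linarith)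
      linarith
    have hpos : (0:ℝ) < 1 - Real.exp (-u) := lt_of_lt_of_le hC hmono
    have hnn : 0 ≤ f u := by rw [hf]; positivity
    rw [Real.norm_eq_abs, abs_of_nonneg hnn, hf]
    simp only
    rw [div_eq_mul_inv, mul_comm (((1 - Real.exp (-1)) ^ 2)⁻¹) _]
    apply mul_le_mul_of_nonneg_left _ (by positivity)
    apply inv_anti₀ (by positivity)
    nlinarith
  have : IntegrableOn f (Set.Ioc 0 1 ∪ Set.Ioi 1) := h01.union h1i
  apply this.mono_set
  intro x hx
  rcases le_or_gt x 1 with h | h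
  · exact Or.inl ⟨hx, h⟩
  · exact Or.inr h

/-- The integral `∫_0^t u² e^{-u}/(1−e^{-u})² du` converges for every `t > 0`, and
`∫_0^∞ u² e^{-u}/(1−e^{-u})² du = π²/3`. -/
theorem integral_sq_exp_div :
    (∀ t : ℝ, 0 < t →
      IntegrableOn (fun u : ℝ => u ^ 2 * Real.exp (-u) / (1 - Real.exp (-u)) ^ 2)
        (Set.Ioc 0 t)) ∧
    ∫ u in Set.Ioi (0 : ℝ), u ^ 2 * Real.exp (-u) / (1 - Real.exp (-u)) ^ 2
      = Real.pi ^ 2 / 3 := by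
  constructor
  · intro t _
    exact aux_integrableOn_f.mono_set Set.Ioc_subset_Ioi_self
  set g : ℕ → ℝ → ℝ := fun n u => (n : ℝ) * (u ^ 2 * Real.exp (-((n:ℝ) * u))) with hg
  have hpt : ∀ u ∈ Set.Ioi (0:ℝ),
      u ^ 2 * Real.exp (-u) / (1 - Real.exp (-u)) ^ 2 = ∑' n : ℕ, g n u := by
    intro u hu
    have hu' : (0:ℝ) < u := hu
    have hlt : ‖Real.exp (-u)‖ < 1 := by
      rw [Real.norm_eq_abs, abs_of_pos (Real.exp_pos _), Real.exp_lt_one_iff]; linarith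
    have hs := (hasSum_coe_mul_geometric_of_norm_lt_one hlt).mul_left (u ^ 2)
    rw [((hs.congr_fun (fun n => ?_)).tsum_eq)]
    · ring
    · simp only [hg, ← Real.exp_nat_mul]
      ring_nf
  have hint : ∀ n : ℕ, IntegrableOn (g n) (Set.Ioi 0) := by
    intro n
    rcases Nat.eq_zero_or_pos n with rfl | hn
    · simp [hg]
    have hn1 : (1:ℝ) ≤ (n:ℝ) := by exact_mod_cast hn
    apply Integrable.mono' (aux_integrable_sq_exp.const_mul (n : ℝ))
      (by simp only [hg]; exact Continuous.aestronglyMeasurable (by fun_prop))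
    filter_upwards [ae_restrict_mem measurableSet_Ioi] with u hu
    have hu' : (0:ℝ) < u := hu
    simp only [hg]
    rw [Real.norm_eq_abs, abs_of_nonneg (by positivity)]
    gcongr
    nlinarith
  have hG3 : Real.Gamma 3 = 2 := by
    rw [show (3:ℝ) = (2:ℕ) + 1 by norm_num, Real.Gamma_nat_eq_factorial]
    norm_num
  have hval : ∀ n : ℕ, ∫ u in Set.Ioi (0:ℝ), g n u = 2 / (n:ℝ) ^ 2 := by
    intro n
    rcases Nat.eq_zero_or_pos n with rfl | hn
    · simp [hg]
    have hn' : (0:ℝ) < (n:ℝ) := by exact_mod_cast hn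
    have hI := Real.integral_rpow_mul_exp_neg_mul_Ioi (a := 3) (r := (n:ℝ)) (by norm_num) hn'
    have heq : ∀ u ∈ Set.Ioi (0:ℝ),
        g n u = (n:ℝ) * (u ^ ((3:ℝ) - 1) * Real.exp (-((n:ℝ) * u))) := by
      intro u hu
      simp only [hg]
      rw [show (3:ℝ) - 1 = ((2:ℕ):ℝ) by norm_num, Real.rpow_natCast]
    rw [setIntegral_congr_fun measurableSet_Ioi heq, integral_const_mul, hI, hG3]
    rw [show ((1:ℝ) / (n:ℝ)) ^ (3:ℝ) = ((1:ℝ) / (n:ℝ)) ^ (3:ℕ) by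
      rw [show (3:ℝ) = ((3:ℕ):ℝ) by norm_num, Real.rpow_natCast], div_pow, one_pow]
    field_simp
  have hsum : HasSum (fun n : ℕ => 2 / (n:ℝ) ^ 2) (Real.pi ^ 2 / 3) := by
    have hfun : (fun n : ℕ => 2 / (n:ℝ) ^ 2) = fun n : ℕ => 2 * ((1:ℝ) / (n:ℝ) ^ 2) := by
      funext n; ring
    rw [hfun, show Real.pi ^ 2 / 3 = 2 * (Real.pi ^ 2 / 6) by ring]
    exact hasSum_zeta_two.mul_left 2
  have hswap : ∫ u in Set.Ioi (0:ℝ), ∑' n : ℕ, g n u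
      = ∑' n : ℕ, ∫ u in Set.Ioi (0:ℝ), g n u := by
    apply integral_tsum (fun n => (hint n).1)
    have hnorm : ∀ n : ℕ, ∫⁻ u in Set.Ioi (0:ℝ), ‖g n u‖ₑ = ENNReal.ofReal (2 / (n:ℝ) ^ 2) := by
      intro n
      have habs : ∫ u in Set.Ioi (0:ℝ), ‖g n u‖ = ∫ u in Set.Ioi (0:ℝ), g n u := by
        apply setIntegral_congr_fun measurableSet_Ioi
        intro u hu
        simp only [hg, Real.norm_eq_abs]
        rw [abs_of_nonneg (by positivity)]
      rw [← ofReal_integral_norm_eq_lintegral_enorm (hint n), habs, hval n]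
    simp_rw [hnorm]
    rw [← ENNReal.ofReal_tsum_of_nonneg (fun n => by positivity) hsum.summable]
    exact ENNReal.ofReal_ne_top
  calc ∫ u in Set.Ioi (0:ℝ), u ^ 2 * Real.exp (-u) / (1 - Real.exp (-u)) ^ 2
      = ∫ u in Set.Ioi (0:ℝ), ∑' n : ℕ, g n u := setIntegral_congr_fun measurableSet_Ioi hpt
    _ = ∑' n : ℕ, ∫ u in Set.Ioi (0:ℝ), g n u := hswap
    _ = ∑' n : ℕ, 2 / (n:ℝ) ^ 2 := by simp_rw [hval]
    _ = Real.pi ^ 2 / 3 := hsum.tsum_eq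
end

section
/- Let Y_n and Y_{s,n} be random variables on a probability space with 0 ≤ Y_{s,n} ≤ Y_n ≤ n a.s., and let a_n = √(6n)/π. Assume: (i) P(|Y_n/a_n − 1| > ε) ≤ e^{-c(ε)√n} for every ε > 0 and n large; (ii) E(Y_{s,n}) / a_n → L as n → ∞ for some L ∈ [0,1]. Then E(Y_{s,n}/Y_n) → L as n → ∞ (where the ratio is interpreted as 0 when Y_n = 0). -/
set_option maxHeartbeats 1000000


open MeasureTheory Filter
open scoped Topology ENNReal

/-- Abstract version of the main step in the proof of Theorem 2: if the denominator
`Y_n` concentrates around `a_n = √(6n)/π` with exponentially small exceptional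
probability, `0 ≤ Y_{s,n} ≤ Y_n ≤ n` a.s., and `E(Y_{s,n})/a_n → L ∈ [0,1]`, then
`E(Y_{s,n}/Y_n) → L` (the ratio being read as `0` when `Y_n = 0`). -/
theorem expected_ratio_tendsto
    {Ω : ℕ → Type*} [∀ n, MeasurableSpace (Ω n)]
    (μ : ∀ n, Measure (Ω n)) [∀ n, IsProbabilityMeasure (μ n)]
    (Y Ys : ∀ n, Ω n → ℝ)
    (hYmeas : ∀ n, Measurable (Y n)) (hYsmeas : ∀ n, Measurable (Ys n))
    (hbound : ∀ n, ∀ᵐ ω ∂(μ n), 0 ≤ Ys n ω ∧ Ys n ω ≤ Y n ω ∧ Y n ω ≤ n)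
    (a : ℕ → ℝ) (ha : ∀ n, a n = Real.sqrt (6 * n) / Real.pi)
    (hconc : ∀ ε : ℝ, 0 < ε → ∃ c > (0 : ℝ), ∀ᶠ n in atTop,
      μ n {ω | ε < |Y n ω / a n - 1|} ≤ ENNReal.ofReal (Real.exp (-c * Real.sqrt n)))
    (L : ℝ) (hL0 : 0 ≤ L) (hL1 : L ≤ 1)
    (hnum : Tendsto (fun n => (∫ ω, Ys n ω ∂(μ n)) / a n) atTop (𝓝 L)) :
    Tendsto (fun n => ∫ ω, (if Y n ω = 0 then 0 else Ys n ω / Y n ω) ∂(μ n))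
      atTop (𝓝 L) := by
  rw [Metric.tendsto_nhds]
  intro δ hδ
  set ε : ℝ := min (δ / 6) (1 / 2) with hεdef
  have hεpos : 0 < ε := lt_min (by linarith) (by norm_num)
  have hεhalf : ε ≤ 1 / 2 := min_le_right _ _
  have hεδ : ε ≤ δ / 6 := min_le_left _ _
  obtain ⟨c, hc, hconc'⟩ := hconc ε hεpos
  -- eventually `a n ≥ 1`
  have hA1 : ∀ᶠ n in atTop, 1 ≤ a n := by
    filter_upwards [eventually_ge_atTop 3] with n hn
    rw [ha n, le_div_iff₀ Real.pi_pos]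
    have h4 : (4 : ℝ) ≤ Real.sqrt (6 * n) := by
      rw [show (4:ℝ) = Real.sqrt 16 by
        rw [show (16:ℝ) = 4 ^ 2 by norm_num, Real.sqrt_sq]; norm_num]
      apply Real.sqrt_le_sqrt
      have : (3 : ℝ) ≤ (n : ℝ) := by exact_mod_cast hn
      linarith
    nlinarith [Real.pi_le_four]
  -- eventually `n * exp (-c √n) < ε`
  have hsqrt : Tendsto Real.sqrt atTop atTop := by
    apply tendsto_atTop_atTop.mpr
    intro b
    refine ⟨max 0 (b ^ 2), fun x hx => ?_⟩
    have h2 : b ^ 2 ≤ x := le_trans (le_max_right _ _) hx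
    calc b ≤ |b| := le_abs_self b
      _ = Real.sqrt (b ^ 2) := (Real.sqrt_sq_eq_abs b).symm
      _ ≤ Real.sqrt x := Real.sqrt_le_sqrt h2
  have hexp0 : Tendsto (fun x : ℝ => x ^ 2 * Real.exp (-(c * x))) atTop (𝓝 0) := by
    have h1 : Tendsto (fun x : ℝ => c * x) atTop atTop :=
      tendsto_id.const_mul_atTop hc
    have h2 : Tendsto (fun x : ℝ => (c * x) ^ 2 * Real.exp (-(c * x))) atTop (𝓝 0) :=
      (Real.tendsto_pow_mul_exp_neg_atTop_nhds_zero 2).comp h1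
    have h3 : Tendsto (fun x : ℝ => (1 / c ^ 2) * ((c * x) ^ 2 * Real.exp (-(c * x))))
        atTop (𝓝 ((1 / c ^ 2) * 0)) := h2.const_mul _
    rw [mul_zero] at h3
    refine h3.congr fun x => ?_
    field_simp
  have hnE : ∀ᶠ n : ℕ in atTop, (n : ℝ) * Real.exp (-c * Real.sqrt n) < ε := by
    have hcomp : Tendsto (fun n : ℕ => (Real.sqrt n) ^ 2 * Real.exp (-(c * Real.sqrt n)))
        atTop (𝓝 0) := hexp0.comp (hsqrt.comp tendsto_natCast_atTop_atTop)
    have hcomp' : Tendsto (fun n : ℕ => (n : ℝ) * Real.exp (-c * Real.sqrt n)) atTop (𝓝 0) := by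
      refine hcomp.congr fun n => ?_
      rw [Real.sq_sqrt (Nat.cast_nonneg n), neg_mul]
    exact hcomp'.eventually_lt_const hεpos
  have hr : ∀ᶠ n in atTop, |(∫ ω, Ys n ω ∂(μ n)) / a n - L| < ε := by
    have := (Metric.tendsto_nhds.mp hnum) ε hεpos
    filter_upwards [this] with n hn
    rwa [Real.dist_eq] at hn
  filter_upwards [hA1, hnE, hr, hconc', eventually_ge_atTop 1] with n hA hnEn hrn hBn hn1
  -- notation
  set A := a n with hAdef
  have hApos : 0 < A := lt_of_lt_of_le one_pos hA
  set B : Set (Ω n) := {ω | ε < |Y n ω / A - 1|} with hBdef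
  have measB : MeasurableSet B := by
    apply measurableSet_lt measurable_const
    exact (((hYmeas n).div_const A).sub measurable_const).abs
  set I : ℝ := ∫ ω, Ys n ω ∂(μ n) with hIdef
  set P : ℝ := ((μ n) B).toReal with hPdef
  have hE0 : 0 ≤ Real.exp (-c * Real.sqrt n) := (Real.exp_pos _).le
  have hPle : P ≤ Real.exp (-c * Real.sqrt n) := ENNReal.toReal_le_of_le_ofReal hE0 hBn
  have hP0 : 0 ≤ P := ENNReal.toReal_nonneg
  have hn1' : (1 : ℝ) ≤ (n : ℝ) := by exact_mod_cast hn1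
  have hPε : P < ε := by nlinarith
  have hnPε : (n : ℝ) * P < ε := by nlinarith
  -- positivity of denominators
  have h1ε : (0 : ℝ) < 1 - ε := by linarith
  have hden1 : (0 : ℝ) < (1 - ε) * A := mul_pos h1ε hApos
  have hden2 : (0 : ℝ) < (1 + ε) * A := mul_pos (by linarith) hApos
  -- integrability
  have hYs_int : Integrable (Ys n) (μ n) := by
    refine (integrable_const ((n : ℝ))).mono' (hYsmeas n).aestronglyMeasurable ?_
    filter_upwards [hbound n] with ω ⟨h0, h1, h2⟩
    rw [Real.norm_eq_abs, abs_le]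
    constructor <;> linarith
  have hf_meas : Measurable fun ω => if Y n ω = 0 then 0 else Ys n ω / Y n ω :=
    Measurable.ite (measurableSet_eq_fun (hYmeas n) measurable_const)
      measurable_const ((hYsmeas n).div (hYmeas n))
  have hf_nonneg : ∀ᵐ ω ∂(μ n), 0 ≤ (if Y n ω = 0 then 0 else Ys n ω / Y n ω) := by
    filter_upwards [hbound n] with ω hω
    obtain ⟨h0, h1, h2⟩ := hω
    split
    · exact le_rfl
    · next hY =>
      have hYpos : 0 < Y n ω := lt_of_le_of_ne (le_trans h0 h1) (Ne.symm hY)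
      exact div_nonneg h0 hYpos.le
  have hf_le_one : ∀ᵐ ω ∂(μ n), (if Y n ω = 0 then 0 else Ys n ω / Y n ω) ≤ 1 := by
    filter_upwards [hbound n] with ω hω
    obtain ⟨h0, h1, h2⟩ := hω
    split
    · norm_num
    · next hY =>
      have hYpos : 0 < Y n ω := lt_of_le_of_ne (le_trans h0 h1) (Ne.symm hY)
      exact (div_le_one hYpos).mpr h1
  have hf_int : Integrable (fun ω => if Y n ω = 0 then 0 else Ys n ω / Y n ω) (μ n) := by
    refine (integrable_const (1 : ℝ)).mono' hf_meas.aestronglyMeasurable ?_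
    filter_upwards [hf_nonneg, hf_le_one] with ω h0 h1
    rw [Real.norm_eq_abs, abs_le]
    constructor <;> linarith
  -- on the good set, `Y` is comparable to `A`
  have hG : ∀ ω, ω ∉ B → (1 - ε) * A ≤ Y n ω ∧ Y n ω ≤ (1 + ε) * A := by
    intro ω hω
    have habs : |Y n ω / A - 1| ≤ ε := not_lt.mp hω
    obtain ⟨hl, hu⟩ := abs_le.mp habs
    constructor
    · rw [← le_div_iff₀ hApos]
      linarith
    · rw [← div_le_iff₀ hApos]
      linarith
  -- upper bound on the integral
  have key1 : (∫ ω, (if Y n ω = 0 then 0 else Ys n ω / Y n ω) ∂(μ n))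
      ≤ I / ((1 - ε) * A) + P := by
    have hineq : ∀ᵐ ω ∂(μ n), (if Y n ω = 0 then 0 else Ys n ω / Y n ω)
        ≤ Ys n ω / ((1 - ε) * A) + B.indicator (fun _ => (1 : ℝ)) ω := by
      filter_upwards [hbound n, hf_le_one] with ω hω hle1
      obtain ⟨h0, h1, h2⟩ := hω
      by_cases hB : ω ∈ B
      · rw [Set.indicator_of_mem hB]
        have : 0 ≤ Ys n ω / ((1 - ε) * A) := div_nonneg h0 hden1.le
        linarith
      · rw [Set.indicator_of_notMem hB, add_zero]
        obtain ⟨hlb, _⟩ := hG ω hB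
        have hYpos : 0 < Y n ω := lt_of_lt_of_le hden1 hlb
        rw [if_neg hYpos.ne']
        exact div_le_div_of_nonneg_left h0 hden1 hlb
    have hind : Integrable (B.indicator (fun _ => (1 : ℝ))) (μ n) :=
      (integrable_const (1 : ℝ)).indicator measB
    calc (∫ ω, (if Y n ω = 0 then 0 else Ys n ω / Y n ω) ∂(μ n))
        ≤ ∫ ω, (Ys n ω / ((1 - ε) * A) + B.indicator (fun _ => (1 : ℝ)) ω) ∂(μ n) :=
          integral_mono_ae hf_int ((hYs_int.div_const _).add hind) hineq
      _ = I / ((1 - ε) * A) + P := by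
          rw [integral_add (hYs_int.div_const _) hind, integral_div,
            integral_indicator_const (1 : ℝ) measB, smul_eq_mul, mul_one]
          rfl
  -- lower bound on the integral
  have key2 : I / ((1 + ε) * A)
      ≤ (∫ ω, (if Y n ω = 0 then 0 else Ys n ω / Y n ω) ∂(μ n))
        + P * ((n : ℝ) / ((1 + ε) * A)) := by
    have hineq : ∀ᵐ ω ∂(μ n), Ys n ω / ((1 + ε) * A)
        ≤ (if Y n ω = 0 then 0 else Ys n ω / Y n ω)
          + B.indicator (fun _ => (n : ℝ) / ((1 + ε) * A)) ω := by
      filter_upwards [hbound n, hf_nonneg] with ω hω hfnn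
      obtain ⟨h0, h1, h2⟩ := hω
      by_cases hB : ω ∈ B
      · rw [Set.indicator_of_mem hB]
        have : Ys n ω / ((1 + ε) * A) ≤ (n : ℝ) / ((1 + ε) * A) := by
          gcongr
          linarith
        linarith
      · rw [Set.indicator_of_notMem hB, add_zero]
        obtain ⟨hlb, hub⟩ := hG ω hB
        have hYpos : 0 < Y n ω := lt_of_lt_of_le hden1 hlb
        rw [if_neg hYpos.ne']
        exact div_le_div_of_nonneg_left h0 hYpos hub
    have hind : Integrable (B.indicator (fun _ => (n : ℝ) / ((1 + ε) * A))) (μ n) :=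
      (integrable_const _).indicator measB
    calc I / ((1 + ε) * A) = ∫ ω, Ys n ω / ((1 + ε) * A) ∂(μ n) := (integral_div _ _).symm
      _ ≤ ∫ ω, ((if Y n ω = 0 then 0 else Ys n ω / Y n ω)
            + B.indicator (fun _ => (n : ℝ) / ((1 + ε) * A)) ω) ∂(μ n) :=
          integral_mono_ae (hYs_int.div_const _) (hf_int.add hind) hineq
      _ = _ := by
          rw [integral_add hf_int hind, integral_indicator_const _ measB, smul_eq_mul]
          rfl
  -- final arithmetic
  set J : ℝ := ∫ ω, (if Y n ω = 0 then 0 else Ys n ω / Y n ω) ∂(μ n) with hJdef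
  rw [Real.dist_eq, abs_lt]
  set r : ℝ := I / A with hrdef
  obtain ⟨hrl, hru⟩ := abs_lt.mp hrn
  have heq1 : I / ((1 - ε) * A) = r / (1 - ε) := by
    rw [hrdef, div_div, mul_comm]
  have heq2 : I / ((1 + ε) * A) = r / (1 + ε) := by
    rw [hrdef, div_div, mul_comm]
  rw [heq1] at key1
  rw [heq2] at key2
  have hPnA : P * ((n : ℝ) / ((1 + ε) * A)) ≤ (n : ℝ) * P := by
    have hge1 : (1 : ℝ) ≤ (1 + ε) * A := by
      have h := mul_le_mul (le_add_of_nonneg_right hεpos.le : (1:ℝ) ≤ 1 + ε) hA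
        zero_le_one (by linarith : (0:ℝ) ≤ 1 + ε)
      linarith [h]
    have h1 : (n : ℝ) / ((1 + ε) * A) ≤ (n : ℝ) := by
      rw [div_le_iff₀ hden2]
      calc (n : ℝ) = (n : ℝ) * 1 := (mul_one _).symm
        _ ≤ (n : ℝ) * ((1 + ε) * A) :=
          mul_le_mul_of_nonneg_left hge1 (Nat.cast_nonneg (α := ℝ) n)
    calc P * ((n : ℝ) / ((1 + ε) * A)) ≤ P * (n : ℝ) := mul_le_mul_of_nonneg_left h1 hP0
      _ = (n : ℝ) * P := mul_comm _ _
  have hu_gt : L - 3 * ε < r / (1 + ε) := by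
    rw [lt_div_iff₀ (by linarith : (0:ℝ) < 1 + ε)]
    nlinarith [hrl, hL1, hεpos.le]
  have hv_lt' : r / (1 - ε) < L + 4 * ε := by
    rw [div_lt_iff₀ h1ε]
    nlinarith [hru, hL1, hεhalf, hεpos.le]
  constructor
  · -- `L - δ < J`
    linarith [key2, hPnA, hnPε, hu_gt]
  · -- `J - L < δ`
    linarith [key1, hPε, hv_lt']
end
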